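/- arXiv:1912.05436 — 8 statements merged into one kernel-verified Lean document; each statement's English description precedes it below -/
import Mathlib

section
/- Let σ : ℝ → ℝ be twice continuously differentiable with bounded second derivative, let R > 0 and a > 0, and let t ∈ ℝ satisfy σ'(t) ≠ 0. Define the one-neuron network f_id(x) = (R / σ'(t)) · (σ(x/R + t) − σ(t)). Then for every x ∈ [−a, a] one has |f_id(x) − x| ≤ (‖σ''‖_∞ · a²) / (2 · |σ'(t)|) · (1/R). -/
open Real Set

/-- Supremum norm of a function `g : ℝ → ℝ`. -/
noncomputable def supNorm (g : ℝ → ℝ) : ℝ := ⨆ x : ℝ, |g x|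

lemma taylor1_bound (σ : ℝ → ℝ) (hσ : ContDiff ℝ 2 σ) (M : ℝ)
    (hM : ∀ x : ℝ, |deriv (deriv σ) x| ≤ M) (t u : ℝ) :
    |σ u - σ t - deriv σ t * (u - t)| ≤ M / 2 * (u - t) ^ 2 := by
  have hM0 : 0 ≤ M := le_trans (abs_nonneg _) (hM 0)
  have hd1 : ContDiff ℝ 1 (deriv σ) := (contDiff_succ_iff_deriv.mp hσ).2.2
  have hcont : Continuous (deriv σ) := hd1.continuous
  have hC : ∀ x : ℝ, ‖deriv (deriv σ) x‖₊ ≤ M.toNNReal := fun x => by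
    rw [← NNReal.coe_le_coe, coe_nnnorm, Real.coe_toNNReal _ hM0, Real.norm_eq_abs]
    exact hM x
  have hlip : ∀ s r : ℝ, |deriv σ s - deriv σ r| ≤ M * |s - r| := by
    intro s r
    have := (lipschitzWith_of_nnnorm_deriv_le (hd1.differentiable one_ne_zero) hC).dist_le_mul s r
    simpa [Real.dist_eq, Real.coe_toNNReal _ hM0] using this
  have hft : σ u - σ t = (∫ s in t..u, deriv σ s) := by
    rw [intervalIntegral.integral_deriv_eq_sub (fun x _ => hσ.differentiable two_ne_zero x)
      (hcont.intervalIntegrable _ _)]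
  have hconst : deriv σ t * (u - t) = (∫ _ in t..u, deriv σ t) := by
    simp [mul_comm]
  have key : σ u - σ t - deriv σ t * (u - t) = (∫ s in t..u, (deriv σ s - deriv σ t)) := by
    rw [hft, hconst,
      intervalIntegral.integral_sub (hcont.intervalIntegrable _ _) intervalIntegrable_const]
  rw [key]
  have h1 : |∫ s in t..u, (deriv σ s - deriv σ t)|
      ≤ |∫ s in t..u, ‖deriv σ s - deriv σ t‖| := by
    simpa using intervalIntegral.norm_integral_le_abs_integral_norm
      (f := fun s => deriv σ s - deriv σ t) (a := t) (b := u) (μ := MeasureTheory.volume)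
  refine h1.trans ?_
  have hintc : ∀ (c d : ℝ), IntervalIntegrable (fun s => ‖deriv σ s - deriv σ t‖)
      MeasureTheory.volume c d := fun c d =>
    ((hcont.sub continuous_const).norm).intervalIntegrable _ _
  rcases le_total t u with h | h
  · have hmono : (∫ s in t..u, ‖deriv σ s - deriv σ t‖)
        ≤ (∫ s in t..u, M * (s - t)) := by
      apply intervalIntegral.integral_mono_on h (hintc t u)
        (((continuous_const.mul (continuous_id.sub continuous_const))).intervalIntegrable _ _)
      intro s hs
      have := hlip s t
      rw [Real.norm_eq_abs]
      rwa [abs_of_nonneg (by linarith [hs.1] : (0:ℝ) ≤ s - t)] at this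
    have hval : (∫ s in t..u, M * (s - t)) = M / 2 * (u - t) ^ 2 := by
      rw [intervalIntegral.integral_const_mul]
      have : (∫ s in t..u, (s - t)) = (u - t) ^ 2 / 2 := by
        rw [intervalIntegral.integral_sub intervalIntegral.intervalIntegrable_id
          intervalIntegrable_const]
        simp [integral_id]
        ring
      rw [this]; ring
    rw [abs_of_nonneg (intervalIntegral.integral_nonneg h (fun s _ => norm_nonneg _))]
    linarith
  · have hflip : |∫ s in t..u, ‖deriv σ s - deriv σ t‖|
        = |∫ s in u..t, ‖deriv σ s - deriv σ t‖| := by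
      rw [intervalIntegral.integral_symm u t, abs_neg]
    rw [hflip]
    have hmono : (∫ s in u..t, ‖deriv σ s - deriv σ t‖)
        ≤ (∫ s in u..t, M * (t - s)) := by
      apply intervalIntegral.integral_mono_on h (hintc u t)
        (((continuous_const.mul (continuous_const.sub continuous_id))).intervalIntegrable _ _)
      intro s hs
      have := hlip s t
      have h2 : |s - t| = t - s := by
        rw [abs_sub_comm]; exact abs_of_nonneg (by linarith [hs.2])
      simpa [Real.norm_eq_abs, h2] using this
    have hval : (∫ s in u..t, M * (t - s)) = M / 2 * (u - t) ^ 2 := by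
      rw [intervalIntegral.integral_const_mul]
      have : (∫ s in u..t, (t - s)) = (u - t) ^ 2 / 2 := by
        rw [intervalIntegral.integral_sub intervalIntegrable_const
          intervalIntegral.intervalIntegrable_id]
        simp [integral_id]
        ring
      rw [this]; ring
    rw [abs_of_nonneg (intervalIntegral.integral_nonneg h (fun s _ => norm_nonneg _))]
    linarith

/-- approximation of the identity by a one-neuron network. -/
theorem identity_network_approx (σ : ℝ → ℝ) (hσ : ContDiff ℝ 2 σ)
    (hbd : ∃ B : ℝ, ∀ x : ℝ, |deriv (deriv σ) x| ≤ B)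
    (R a t : ℝ) (hR : 0 < R) (ha : 0 < a) (ht : deriv σ t ≠ 0)
    (f_id : ℝ → ℝ)
    (hfid : ∀ x : ℝ, f_id x = (R / deriv σ t) * (σ (x / R + t) - σ t)) :
    ∀ x ∈ Set.Icc (-a) a,
      |f_id x - x| ≤ (supNorm (deriv (deriv σ)) * a ^ 2) / (2 * |deriv σ t|) * (1 / R) := by
  obtain ⟨B, hB⟩ := hbd
  set M := supNorm (deriv (deriv σ)) with hMdef
  have hbdd : BddAbove (Set.range fun x => |deriv (deriv σ) x|) := ⟨B, by rintro _ ⟨x, rfl⟩; exact hB x⟩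
  have hM : ∀ x : ℝ, |deriv (deriv σ) x| ≤ M := fun x => le_ciSup hbdd x
  have hM0 : 0 ≤ M := le_trans (abs_nonneg _) (hM 0)
  intro x hx
  set d := deriv σ t with hd
  have hd0 : |d| > 0 := abs_pos.mpr ht
  have hu : x / R + t - t = x / R := by ring
  have htay := taylor1_bound σ hσ M hM t (x / R + t)
  rw [hu] at htay
  have heq : f_id x - x = (R / d) * (σ (x / R + t) - σ t - d * (x / R)) := by
    rw [hfid x]
    field_simp
  rw [heq, abs_mul, abs_div]
  have hRabs : |R| = R := abs_of_pos hR
  have hx2 : x ^ 2 ≤ a ^ 2 := by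
    have h1 := hx.1; have h2 := hx.2; nlinarith
  have hstep : |σ (x / R + t) - σ t - d * (x / R)| ≤ M / 2 * (x / R) ^ 2 := htay
  calc |R| / |d| * |σ (x / R + t) - σ t - d * (x / R)|
      ≤ |R| / |d| * (M / 2 * (x / R) ^ 2) := by
        apply mul_le_mul_of_nonneg_left hstep (by positivity)
    _ = M * x ^ 2 / (2 * |d|) * (1 / R) := by
        rw [hRabs]; field_simp
    _ ≤ M * a ^ 2 / (2 * |d|) * (1 / R) := by
        gcongr
    _ = (M * a ^ 2) / (2 * |d|) * (1 / R) := rfl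
end

section
/- Let σ : ℝ → ℝ be three times continuously differentiable with bounded third derivative, let R > 0 and a > 0, and let t ∈ ℝ satisfy σ''(t) ≠ 0. Define f_sq(x) = (R² / σ''(t)) · (σ(2x/R + t) − 2·σ(x/R + t) + σ(t)). Then for every x ∈ [−a, a] one has |f_sq(x) − x²| ≤ (5 · ‖σ'''‖_∞ · a³) / (3 · |σ''(t)|) · (1/R). -/
open Real Set intervalIntegral MeasureTheory

private lemma key_nonneg {φ φ' : ℝ → ℝ} (hd : ∀ s, HasDerivAt φ (φ' s) s)
    (hc : Continuous φ') (h0 : φ 0 = 0) {C : ℝ} (k : ℕ)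
    (hb : ∀ s, |φ' s| ≤ C * |s| ^ k) {h : ℝ} (hh : 0 ≤ h) :
    |φ h| ≤ C * h ^ (k + 1) / (k + 1) := by
  have heq : φ h = ∫ s in (0:ℝ)..h, φ' s := by
    rw [intervalIntegral.integral_eq_sub_of_hasDerivAt (fun s _ => hd s)
      (hc.intervalIntegrable 0 h), h0, sub_zero]
  have hI : IntervalIntegrable (fun s => C * |s| ^ k) volume 0 h :=
    (Continuous.intervalIntegrable (by fun_prop) 0 h)
  have hle := intervalIntegral.norm_integral_le_abs_of_norm_le (μ := volume) (f := φ')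
    (g := fun s => C * |s| ^ k) (a := 0) (b := h) (ae_of_all _ fun s => hb s) hI
  have hcongr : (∫ s in (0:ℝ)..h, C * |s| ^ k) = C * h ^ (k + 1) / (k + 1) := by
    rw [intervalIntegral.integral_congr (g := fun s => C * s ^ k)
      (fun s hs => by
        rw [Set.uIcc_of_le hh] at hs
        simp [abs_of_nonneg hs.1]),
      intervalIntegral.integral_const_mul, integral_pow]
    ring
  rw [heq]
  calc ‖∫ s in (0:ℝ)..h, φ' s‖ ≤ |∫ s in (0:ℝ)..h, C * |s| ^ k| := hle
    _ = C * h ^ (k + 1) / (k + 1) := by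
        rw [hcongr, abs_of_nonneg]
        have : 0 ≤ C := by
          have := (abs_nonneg (φ' 1)).trans (hb 1)
          simpa using this
        positivity

private lemma key {φ φ' : ℝ → ℝ} (hd : ∀ s, HasDerivAt φ (φ' s) s)
    (hc : Continuous φ') (h0 : φ 0 = 0) {C : ℝ} (k : ℕ)
    (hb : ∀ s, |φ' s| ≤ C * |s| ^ k) (h : ℝ) :
    |φ h| ≤ C * |h| ^ (k + 1) / (k + 1) := by
  rcases le_or_gt 0 h with hh | hh
  · rw [abs_of_nonneg hh]; exact key_nonneg hd hc h0 k hb hh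
  · have hd' : ∀ s, HasDerivAt (fun s => φ (-s)) (-φ' (-s)) s := by
      intro s
      have := (hd (-s)).comp s (hasDerivAt_neg s)
      simpa [Function.comp_def] using this
    have hb' : ∀ s, |(-φ' (-s))| ≤ C * |s| ^ k := by
      intro s; rw [abs_neg]
      simpa using hb (-s)
    have := key_nonneg (φ := fun s => φ (-s)) hd' (by fun_prop) (by simpa using h0) k hb'
      (h := -h) (by linarith)
    rw [abs_of_neg hh]
    simpa using this


/-- approximation of the square function by a shallow network. -/
theorem square_network_approx (σ : ℝ → ℝ) (hσ : ContDiff ℝ 3 σ)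
    (hbd : ∃ B : ℝ, ∀ x : ℝ, |deriv (deriv (deriv σ)) x| ≤ B)
    (R a t : ℝ) (hR : 0 < R) (ha : 0 < a) (ht : deriv (deriv σ) t ≠ 0)
    (f_sq : ℝ → ℝ)
    (hfsq : ∀ x : ℝ, f_sq x =
      (R ^ 2 / deriv (deriv σ) t) * (σ (2 * x / R + t) - 2 * σ (x / R + t) + σ t)) :
    ∀ x ∈ Set.Icc (-a) a,
      |f_sq x - x ^ 2| ≤
        (5 * supNorm (deriv (deriv (deriv σ))) * a ^ 3) / (3 * |deriv (deriv σ) t|) * (1 / R) := by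
  obtain ⟨B, hB⟩ := hbd
  set M := supNorm (deriv (deriv (deriv σ))) with hMdef
  set c := deriv (deriv σ) t with hcdef
  have hM : ∀ y, |deriv (deriv (deriv σ)) y| ≤ M :=
    fun y => le_ciSup ⟨B, by rintro _ ⟨y, rfl⟩; exact hB y⟩ y
  have hM0 : 0 ≤ M := (abs_nonneg _).trans (hM 0)
  -- regularity
  have h2 : ContDiff ℝ 2 (deriv σ) := by
    have := contDiff_succ_iff_deriv (n := 2) (f := σ) (𝕜 := ℝ)
    rw [show (2:WithTop ℕ∞)+1 = 3 from rfl] at this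
    exact (this.mp hσ).2.2
  have h1 : ContDiff ℝ 1 (deriv (deriv σ)) := by
    have := contDiff_succ_iff_deriv (n := 1) (f := deriv σ) (𝕜 := ℝ)
    rw [show (1:WithTop ℕ∞)+1 = 2 from rfl] at this
    exact (this.mp h2).2.2
  have hd0 : Differentiable ℝ σ := hσ.differentiable (by norm_num)
  have hd1 : Differentiable ℝ (deriv σ) := h2.differentiable (by norm_num)
  have hd2 : Differentiable ℝ (deriv (deriv σ)) := (contDiff_one_iff_deriv.mp h1).1
  have hc3 : Continuous (deriv (deriv (deriv σ))) := (contDiff_one_iff_deriv.mp h1).2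
  have hcont1 : Continuous (deriv σ) := hd1.continuous
  have hcont2 : Continuous (deriv (deriv σ)) := hd2.continuous
  -- the three auxiliary functions
  set u : ℝ → ℝ := fun s => deriv (deriv σ) (t + s) - c with hudef
  set v : ℝ → ℝ := fun s => deriv σ (t + s) - deriv σ t - c * s with hvdef
  set g : ℝ → ℝ := fun s => σ (t + s) - σ t - deriv σ t * s - c * s ^ 2 / 2 with hgdef
  have hu : ∀ s, HasDerivAt u (deriv (deriv (deriv σ)) (t + s)) s := by
    intro s
    have h1' : HasDerivAt (fun s => deriv (deriv σ) (t + s))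
        (deriv (deriv (deriv σ)) (t + s)) s := by
      have := ((hd2 (t + s)).hasDerivAt).comp s ((hasDerivAt_id s).const_add t)
      simpa [Function.comp_def] using this
    simpa [hudef] using h1'.sub_const c
  have hv : ∀ s, HasDerivAt v (u s) s := by
    intro s
    have h1' : HasDerivAt (fun s => deriv σ (t + s)) (deriv (deriv σ) (t + s)) s := by
      have := ((hd1 (t + s)).hasDerivAt).comp s ((hasDerivAt_id s).const_add t)
      simpa [Function.comp_def] using this
    have := (h1'.sub_const (deriv σ t)).sub ((hasDerivAt_id s).const_mul c)
    exact this.congr_deriv (by simp [hudef])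
  have hg : ∀ s, HasDerivAt g (v s) s := by
    intro s
    have h1' : HasDerivAt (fun s => σ (t + s)) (deriv σ (t + s)) s := by
      have := ((hd0 (t + s)).hasDerivAt).comp s ((hasDerivAt_id s).const_add t)
      simpa [Function.comp_def] using this
    have h2' : HasDerivAt (fun s : ℝ => c * s ^ 2 / 2) (c * s) s := by
      have := ((hasDerivAt_pow 2 s).const_mul c).div_const 2
      exact this.congr_deriv (by ring)
    have := ((h1'.sub_const (σ t)).sub ((hasDerivAt_id s).const_mul (deriv σ t))).sub h2'
    exact this.congr_deriv (by simp [hvdef])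
  -- continuity of the derivatives
  have hcu : Continuous u := by fun_prop
  have hcv : Continuous v := by fun_prop
  -- iterated bounds
  have hu0 : u 0 = 0 := by simp [hudef, hcdef]
  have hv0 : v 0 = 0 := by simp [hvdef]
  have hg0 : g 0 = 0 := by simp [hgdef]
  have hub : ∀ s, |u s| ≤ M * |s| ^ 1 := by
    intro s
    have := key (φ := u) hu (by fun_prop) hu0 0
      (fun s => by simpa using hM (t + s)) s
    simpa using this
  have hvb : ∀ s, |v s| ≤ (M / 2) * |s| ^ 2 := by
    intro s
    have := key (φ := v) hv hcu hv0 1 hub s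
    norm_num at this ⊢
    linarith
  have hgb : ∀ s, |g s| ≤ M * |s| ^ 3 / 6 := by
    intro s
    have := key (φ := g) hg hcv hg0 2 hvb s
    norm_num at this ⊢
    linarith
  -- main estimate
  intro x hx
  have hxa : |x| ≤ a := abs_le.mpr ⟨hx.1, hx.2⟩
  set h : ℝ := x / R with hhdef
  have hfe : f_sq x - x ^ 2 = (R ^ 2 / c) * (g (2 * h) - 2 * g h) := by
    rw [hfsq x]
    have e1 : 2 * x / R + t = t + 2 * h := by rw [hhdef]; ring
    have e2 : x / R + t = t + h := by rw [hhdef]; ring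
    have hx2 : x ^ 2 = R ^ 2 * h ^ 2 := by
      rw [hhdef]; field_simp
    rw [e1, e2, hx2]
    simp only [hgdef]
    field_simp
    ring
  have hgsum : |g (2 * h) - 2 * g h| ≤ (5 / 3) * M * |h| ^ 3 := by
    calc |g (2 * h) - 2 * g h| ≤ |g (2 * h)| + |2 * g h| := abs_sub _ _
      _ ≤ (5 / 3) * M * |h| ^ 3 := by
          have e3 : |2 * h| = 2 * |h| := by rw [abs_mul]; norm_num
          have e4 : |2 * g h| = 2 * |g h| := by rw [abs_mul]; norm_num
          have b1 := hgb (2 * h)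
          rw [e3] at b1
          rw [e4]
          nlinarith [hgb h, abs_nonneg h, hM0]
  have hcpos : 0 < |c| := abs_pos.mpr ht
  have hhx : |h| = |x| / R := by rw [hhdef, abs_div, abs_of_pos hR]
  calc |f_sq x - x ^ 2| = R ^ 2 / |c| * |g (2 * h) - 2 * g h| := by
        rw [hfe, abs_mul, abs_div, abs_pow, abs_of_pos hR]
    _ ≤ R ^ 2 / |c| * ((5 / 3) * M * |h| ^ 3) := by
        apply mul_le_mul_of_nonneg_left hgsum
        positivity
    _ = 5 * M * |x| ^ 3 / (3 * |c|) * (1 / R) := by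
        rw [hhx]
        field_simp
    _ ≤ 5 * M * a ^ 3 / (3 * |c|) * (1 / R) := by
        gcongr
end

section
/- Let σ : ℝ → [0,1] be 2-admissible with associated point t_σ (so σ'(t_σ) ≠ 0 and σ''(t_σ) ≠ 0). For R > 0 define f_mult(x, y) = (R² / (4·σ''(t_σ))) · ( σ(2(x+y)/R + t_σ) − 2·σ((x+y)/R + t_σ) − σ(2(x−y)/R + t_σ) + 2·σ((x−y)/R + t_σ) ). Then for any a > 0 and all x, y ∈ [−a, a] one has |f_mult(x, y) − x·y| ≤ (20 · ‖σ'''‖_∞ · a³) / (3 · |σ''(t_σ)|) · (1/R). -/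
open Real Set

lemma stepP (g : ℝ → ℝ) (hg : Differentiable ℝ g) (hc : Continuous (deriv g))
    (h0 : g 0 = 0) (C : ℝ) (n : ℕ) (hb : ∀ s, 0 ≤ s → |deriv g s| ≤ C * s ^ n) :
    ∀ δ, 0 ≤ δ → |g δ| ≤ C * δ ^ (n + 1) / (n + 1) := by
  intro δ hδ
  have hFTC : ∫ s in (0:ℝ)..δ, deriv g s = g δ - g 0 :=
    intervalIntegral.integral_deriv_eq_sub (fun x _ => hg x) (hc.intervalIntegrable _ _)
  have h1 : |g δ| = |∫ s in (0:ℝ)..δ, deriv g s| := by rw [hFTC, h0, sub_zero]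
  have h2 : |∫ s in (0:ℝ)..δ, deriv g s| ≤ ∫ s in (0:ℝ)..δ, |deriv g s| :=
    intervalIntegral.abs_integral_le_integral_abs hδ
  have h3 : (∫ s in (0:ℝ)..δ, |deriv g s|) ≤ ∫ s in (0:ℝ)..δ, C * s ^ n := by
    apply intervalIntegral.integral_mono_on hδ
    · exact (hc.abs).intervalIntegrable _ _
    · exact ((continuous_const.mul (continuous_pow n))).intervalIntegrable _ _
    · intro s hs; exact hb s hs.1
  have h4 : (∫ s in (0:ℝ)..δ, C * s ^ n) = C * δ ^ (n + 1) / (n + 1) := by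
    rw [intervalIntegral.integral_const_mul, integral_pow]; ring
  rw [h1]; rw [h4] at h3; linarith

lemma taylor2_nonneg (f : ℝ → ℝ) (hf : ContDiff ℝ 3 f) (M : ℝ)
    (hM : ∀ x, |deriv (deriv (deriv f)) x| ≤ M) (t δ : ℝ) (hδ : 0 ≤ δ) :
    |f (t + δ) - f t - deriv f t * δ - deriv (deriv f) t * δ ^ 2 / 2| ≤ M * δ ^ 3 / 6 := by
  have h32 : (3 : WithTop ℕ∞) = 2 + 1 := by norm_num
  rw [h32, contDiff_succ_iff_deriv] at hf
  obtain ⟨hfd, -, hf2⟩ := hf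
  have h21 : (2 : WithTop ℕ∞) = 1 + 1 := by norm_num
  rw [h21, contDiff_succ_iff_deriv] at hf2
  obtain ⟨hf1d, -, hf1⟩ := hf2
  rw [contDiff_one_iff_deriv] at hf1
  obtain ⟨hf2d, hf3c⟩ := hf1
  have hf2c : Continuous (deriv (deriv f)) := hf2d.continuous
  have hf1c : Continuous (deriv f) := hf1d.continuous
  set f1 := deriv f
  set f2 := deriv f1
  set f3 := deriv f2
  -- e2
  set e2 : ℝ → ℝ := fun s => f2 (t + s) - f2 t with he2
  have hD2 : ∀ s, HasDerivAt e2 (f3 (t + s)) s := by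
    intro s
    exact ((hf2d (t + s)).hasDerivAt.comp_const_add t s).sub_const (f2 t)
  have hd2 : deriv e2 = fun s => f3 (t + s) := funext fun s => (hD2 s).deriv
  have hb2 : ∀ s, 0 ≤ s → |e2 s| ≤ M * s ^ 1 := by
    intro s hs
    refine (stepP e2 (fun s => (hD2 s).differentiableAt) (by rw [hd2]; fun_prop)
      (by simp [he2]) M 0 ?_ s hs).trans (le_of_eq ?_)
    · intro u _; rw [hd2]; simpa using hM (t + u)
    · push_cast; ring
  -- e1
  set e1 : ℝ → ℝ := fun s => f1 (t + s) - f1 t - f2 t * s with he1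
  have hD1 : ∀ s, HasDerivAt e1 (e2 s) s := by
    intro s
    have h := (((hf1d (t + s)).hasDerivAt.comp_const_add t s).sub_const (f1 t)).sub
      ((hasDerivAt_id s).const_mul (f2 t))
    simpa [he1, he2, mul_one, Pi.sub_def] using h
  have hd1 : deriv e1 = e2 := funext fun s => (hD1 s).deriv
  have hb1 : ∀ s, 0 ≤ s → |e1 s| ≤ (M / 2) * s ^ 2 := by
    intro s hs
    refine (stepP e1 (fun s => (hD1 s).differentiableAt)
      (by rw [hd1]; exact ((hf2c.comp (by fun_prop)).sub continuous_const))
      (by simp [he1]) M 1 ?_ s hs).trans (le_of_eq ?_)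
    · intro u hu; rw [hd1]; simpa using hb2 u hu
    · push_cast; ring
  -- e0
  set e0 : ℝ → ℝ := fun s => f (t + s) - f t - f1 t * s - f2 t * s ^ 2 / 2 with he0
  have hD0 : ∀ s, HasDerivAt e0 (e1 s) s := by
    intro s
    have hsq : HasDerivAt (fun u : ℝ => f2 t * u ^ 2 / 2) (f2 t * s) s := by
      have := ((hasDerivAt_pow 2 s).const_mul (f2 t)).div_const 2
      refine this.congr_deriv ?_
      push_cast; ring
    have h := ((((hfd (t + s)).hasDerivAt.comp_const_add t s).sub_const (f t)).sub
      ((hasDerivAt_id s).const_mul (f1 t))).sub hsq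
    simpa [he0, he1, mul_one, Pi.sub_def] using h
  have hd0 : deriv e0 = e1 := funext fun s => (hD0 s).deriv
  have hb0 : |e0 δ| ≤ M * δ ^ 3 / 6 := by
    refine (stepP e0 (fun s => (hD0 s).differentiableAt)
      (by rw [hd0]; exact (((hf1c.comp (by fun_prop)).sub continuous_const).sub
        (continuous_const.mul continuous_id))) (by simp [he0]) (M / 2) 2 ?_ δ hδ).trans
      (le_of_eq ?_)
    · intro u hu; rw [hd0]; exact hb1 u hu
    · push_cast; ring
  exact hb0

lemma taylor2 (f : ℝ → ℝ) (hf : ContDiff ℝ 3 f) (M : ℝ)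
    (hM : ∀ x, |deriv (deriv (deriv f)) x| ≤ M) (t δ : ℝ) :
    |f (t + δ) - f t - deriv f t * δ - deriv (deriv f) t * δ ^ 2 / 2| ≤ M * |δ| ^ 3 / 6 := by
  rcases le_or_gt 0 δ with h | h
  · rw [abs_of_nonneg h]; exact taylor2_nonneg f hf M hM t δ h
  · have hg : ContDiff ℝ 3 (fun s => f (-s)) := hf.comp contDiff_neg
    have hd1 : deriv (fun s => f (-s)) = fun s => -deriv f (-s) :=
      funext fun s => deriv_comp_neg f s
    have hd2 : deriv (deriv (fun s => f (-s))) = fun s => deriv (deriv f) (-s) := by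
      rw [hd1]; funext s
      rw [deriv.fun_neg, deriv_comp_neg, neg_neg]
    have hd3 : deriv (deriv (deriv (fun s => f (-s)))) = fun s => -deriv (deriv (deriv f)) (-s) := by
      rw [hd2]; funext s; rw [deriv_comp_neg]
    have hMg : ∀ x, |deriv (deriv (deriv (fun s => f (-s)))) x| ≤ M := by
      intro x; rw [hd3]; simpa using hM (-x)
    have H := taylor2_nonneg (fun s => f (-s)) hg M hMg (-t) (-δ) (by linarith)
    rw [hd2, hd1] at H
    simp only [neg_add, neg_neg] at H
    rw [abs_of_neg h]
    calc |f (t + δ) - f t - deriv f t * δ - deriv (deriv f) t * δ ^ 2 / 2|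
        = |f (t + δ) - f t - -deriv f t * -δ - deriv (deriv f) t * (-δ) ^ 2 / 2| := by ring_nf
      _ ≤ M * (-δ) ^ 3 / 6 := H
      _ = M * (-δ) ^ 3 / 6 := rfl

/-- A function `σ : ℝ → [0,1]` is 2-admissible with associated point `tσ`:
it is nondecreasing, Lipschitz continuous, three times continuously differentiable with
bounded derivatives, its first and second derivative at `tσ` are nonzero, and
`|σ(y) − 1| ≤ 1/y` for `y > 0` and `|σ(y)| ≤ 1/|y|` for `y < 0`. -/
def TwoAdmissible (σ : ℝ → ℝ) (tσ : ℝ) : Prop :=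
  (∀ x : ℝ, σ x ∈ Set.Icc (0 : ℝ) 1) ∧ Monotone σ ∧ (∃ L : NNReal, LipschitzWith L σ) ∧
  ContDiff ℝ 3 σ ∧
  (∀ k : ℕ, k ≤ 3 → ∃ B : ℝ, ∀ x : ℝ, |iteratedDeriv k σ x| ≤ B) ∧
  deriv σ tσ ≠ 0 ∧ deriv (deriv σ) tσ ≠ 0 ∧
  (∀ y : ℝ, 0 < y → |σ y - 1| ≤ 1 / y) ∧ (∀ y : ℝ, y < 0 → |σ y| ≤ 1 / |y|)

/-- approximation of the product by the network `f_mult`. -/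
theorem product_network_approx (σ : ℝ → ℝ) (tσ : ℝ) (hσ : TwoAdmissible σ tσ)
    (R : ℝ) (hR : 0 < R)
    (f_mult : ℝ → ℝ → ℝ)
    (hfm : ∀ x y : ℝ, f_mult x y = (R ^ 2 / (4 * deriv (deriv σ) tσ)) *
      (σ (2 * (x + y) / R + tσ) - 2 * σ ((x + y) / R + tσ)
        - σ (2 * (x - y) / R + tσ) + 2 * σ ((x - y) / R + tσ))) :
    ∀ a : ℝ, 0 < a → ∀ x ∈ Set.Icc (-a) a, ∀ y ∈ Set.Icc (-a) a,
      |f_mult x y - x * y| ≤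
        (20 * supNorm (deriv (deriv (deriv σ))) * a ^ 3) / (3 * |deriv (deriv σ) tσ|) * (1 / R) := by
  intro a ha x hx y hy
  obtain ⟨-, -, -, hsm, hbd, -, hd2ne, -, -⟩ := hσ
  set M : ℝ := supNorm (deriv (deriv (deriv σ))) with hMdef
  set d2 : ℝ := deriv (deriv σ) tσ with hd2def
  -- M bounds the third derivative
  have hit3 : iteratedDeriv 3 σ = deriv (deriv (deriv σ)) := by
    rw [show (3:ℕ) = 2 + 1 from rfl, iteratedDeriv_succ,
      show (2:ℕ) = 1 + 1 from rfl, iteratedDeriv_succ, iteratedDeriv_one]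
  have hM : ∀ u : ℝ, |deriv (deriv (deriv σ)) u| ≤ M := by
    obtain ⟨B, hB⟩ := hbd 3 le_rfl
    rw [hit3] at hB
    intro u
    exact le_ciSup ⟨B, fun v ⟨z, hz⟩ => hz ▸ hB z⟩ u
  have hM0 : 0 ≤ M := le_trans (abs_nonneg _) (hM 0)
  -- key estimate
  have key : ∀ u : ℝ,
      |σ (2 * u / R + tσ) - 2 * σ (u / R + tσ) - (-σ tσ + d2 * (u / R) ^ 2)|
        ≤ 10 / 6 * (M * |u / R| ^ 3) := by
    intro u
    have h1 := taylor2 σ hsm M hM tσ (2 * (u / R))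
    have h2 := taylor2 σ hsm M hM tσ (u / R)
    have e1 : 2 * u / R + tσ = tσ + 2 * (u / R) := by ring
    have e2 : u / R + tσ = tσ + u / R := by ring
    rw [e1, e2]
    have esplit : σ (tσ + 2 * (u / R)) - 2 * σ (tσ + u / R) - (-σ tσ + d2 * (u / R) ^ 2)
        = (σ (tσ + 2 * (u / R)) - σ tσ - deriv σ tσ * (2 * (u / R))
            - d2 * (2 * (u / R)) ^ 2 / 2)
          - 2 * (σ (tσ + u / R) - σ tσ - deriv σ tσ * (u / R) - d2 * (u / R) ^ 2 / 2) := by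
      ring
    rw [esplit]
    have habs2 : |2 * (u / R)| = 2 * |u / R| := by
      rw [abs_mul]; norm_num
    have tri : |(σ (tσ + 2 * (u / R)) - σ tσ - deriv σ tσ * (2 * (u / R))
            - d2 * (2 * (u / R)) ^ 2 / 2)
          - 2 * (σ (tσ + u / R) - σ tσ - deriv σ tσ * (u / R) - d2 * (u / R) ^ 2 / 2)|
        ≤ |σ (tσ + 2 * (u / R)) - σ tσ - deriv σ tσ * (2 * (u / R))
            - d2 * (2 * (u / R)) ^ 2 / 2|
          + 2 * |σ (tσ + u / R) - σ tσ - deriv σ tσ * (u / R) - d2 * (u / R) ^ 2 / 2| := by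
      rw [show (2:ℝ) * |σ (tσ + u / R) - σ tσ - deriv σ tσ * (u / R) - d2 * (u / R) ^ 2 / 2|
          = |2 * (σ (tσ + u / R) - σ tσ - deriv σ tσ * (u / R) - d2 * (u / R) ^ 2 / 2)| by
        rw [abs_mul, abs_two]]
      exact abs_sub _ _
    refine tri.trans ?_
    rw [← hd2def] at h1 h2
    rw [habs2, show ((2:ℝ) * |u / R|) ^ 3 = 8 * |u / R| ^ 3 from by ring] at h1
    linarith [h1, h2]
  -- split f_mult - x*y
  have hsplit : f_mult x y - x * y = R ^ 2 / (4 * d2) *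
      ((σ (2 * (x + y) / R + tσ) - 2 * σ ((x + y) / R + tσ)
          - (-σ tσ + d2 * ((x + y) / R) ^ 2))
        - (σ (2 * (x - y) / R + tσ) - 2 * σ ((x - y) / R + tσ)
          - (-σ tσ + d2 * ((x - y) / R) ^ 2))) := by
    rw [hfm]
    field_simp
    ring
  have hxa : |x| ≤ a := abs_le.mpr ⟨hx.1, hx.2⟩
  have hya : |y| ≤ a := abs_le.mpr ⟨hy.1, hy.2⟩
  have hsum : ∀ u : ℝ, |u| ≤ 2 * a → M * |u / R| ^ 3 ≤ M * (2 * a / R) ^ 3 := by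
    intro u hu
    apply mul_le_mul_of_nonneg_left _ hM0
    apply pow_le_pow_left₀ (abs_nonneg _)
    rw [abs_div, abs_of_pos hR]
    gcongr
  have hu1 : |x + y| ≤ 2 * a := by
    calc |x + y| ≤ |x| + |y| := abs_add_le x y
      _ ≤ 2 * a := by linarith
  have hu2 : |x - y| ≤ 2 * a := by
    calc |x - y| ≤ |x| + |y| := abs_sub x y
      _ ≤ 2 * a := by linarith
  have hcoef : |R ^ 2 / (4 * d2)| = R ^ 2 / (4 * |d2|) := by
    rw [abs_div, abs_mul, abs_pow, abs_of_pos hR]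
    norm_num
  have habs : |f_mult x y - x * y| ≤ R ^ 2 / (4 * |d2|) *
      (10 / 6 * (M * (2 * a / R) ^ 3) + 10 / 6 * (M * (2 * a / R) ^ 3)) := by
    rw [hsplit, abs_mul, hcoef]
    apply mul_le_mul_of_nonneg_left _ (by positivity)
    refine le_trans (abs_sub _ _) ?_
    refine le_trans (add_le_add (key (x + y)) (key (x - y))) ?_
    linarith [hsum (x + y) hu1, hsum (x - y) hu2]
  refine habs.trans (le_of_eq ?_)
  have hd2abs : |d2| ≠ 0 := abs_ne_zero.mpr hd2ne
  field_simp
  ring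
end

section
/- Let σ : ℝ → [0,1] be 2-admissible with associated point t_σ, and let t_{σ,id} ∈ ℝ satisfy σ'(t_{σ,id}) ≠ 0. Let f_id(x) = (R/σ'(t_{σ,id}))·(σ(x/R + t_{σ,id}) − σ(t_{σ,id})) and let f_mult be the product-approximating network f_mult(x,y) = (R²/(4σ''(t_σ)))·(σ(2(x+y)/R + t_σ) − 2σ((x+y)/R + t_σ) − σ(2(x−y)/R + t_σ) + 2σ((x−y)/R + t_σ)). Assume a ≥ 1 and R ≥ (‖σ''‖_∞ · a) / (2·|σ'(t_{σ,id})|). Then the network f_ReLU(x) = f_mult(f_id(x), σ(R·x)) satisfies |f_ReLU(x) − max{x, 0}| ≤ 56 · (max{‖σ''‖_∞, ‖σ'''‖_∞, 1} / min{2·|σ'(t_{σ,id})|, |σ''(t_σ)|, 1}) · a³ · (1/R) for all x ∈ [−a, a]. -/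
open Real Set

open intervalIntegral MeasureTheory

lemma lip_of_deriv_bound (g : ℝ → ℝ) (hg : Differentiable ℝ g) (B : ℝ)
    (hB : ∀ t, |deriv g t| ≤ B) (s t : ℝ) : |g s - g t| ≤ B * |s - t| := by
  have := Convex.norm_image_sub_le_of_norm_deriv_le (s := (univ : Set ℝ))
    (fun x _ => hg x) (fun x _ => by rw [Real.norm_eq_abs]; exact hB x) convex_univ (mem_univ t) (mem_univ s)
  simpa using this

lemma taylor1_core (f : ℝ → ℝ) (hd1 : Differentiable ℝ f) (hd2 : Differentiable ℝ (deriv f))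
    (hc2 : Continuous (deriv f)) (B : ℝ)
    (hB : ∀ t, |deriv (deriv f) t| ≤ B) (a x : ℝ) (hax : a ≤ x) :
    |f x - f a - deriv f a * (x - a)| ≤ B / 2 * (x - a) ^ 2 := by
  have hint : IntervalIntegrable (deriv f) volume a x := hc2.intervalIntegrable _ _
  have e1 : ∫ t in a..x, deriv f t = f x - f a :=
    integral_deriv_eq_sub (fun t _ => (hd1 t)) hint
  have e2 : ∫ t in a..x, (deriv f t - deriv f a)
      = f x - f a - deriv f a * (x - a) := by
    rw [intervalIntegral.integral_sub hint (intervalIntegrable_const), e1,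
      intervalIntegral.integral_const, smul_eq_mul]
    ring
  rw [← e2]
  have habs : |∫ t in a..x, (deriv f t - deriv f a)|
      ≤ ∫ t in a..x, |deriv f t - deriv f a| := by
    simpa [Real.norm_eq_abs] using
      intervalIntegral.norm_integral_le_integral_norm (f := fun t => deriv f t - deriv f a) hax
  have hint1 : IntervalIntegrable (fun t => |deriv f t - deriv f a|) volume a x :=
    ((hc2.sub continuous_const).abs).intervalIntegrable _ _
  have hint2 : IntervalIntegrable (fun t => B * (t - a)) volume a x :=
    Continuous.intervalIntegrable (by fun_prop) _ _
  have hmono : ∫ t in a..x, |deriv f t - deriv f a| ≤ ∫ t in a..x, B * (t - a) := by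
    refine intervalIntegral.integral_mono_on hax hint1 hint2 (fun t ht => ?_)
    have := lip_of_deriv_bound (deriv f) hd2 B hB t a
    rwa [abs_of_nonneg (by linarith [ht.1] : (0:ℝ) ≤ t - a)] at this
  have hval : ∫ t in a..x, B * (t - a) = B / 2 * (x - a) ^ 2 := by
    rw [intervalIntegral.integral_const_mul,
      intervalIntegral.integral_comp_sub_right (fun t => t) a, integral_id]
    ring
  calc |∫ t in a..x, (deriv f t - deriv f a)| ≤ ∫ t in a..x, |deriv f t - deriv f a| := habs
    _ ≤ ∫ t in a..x, B * (t - a) := hmono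
    _ = B / 2 * (x - a) ^ 2 := hval

lemma taylor2_core (f : ℝ → ℝ) (hd1 : Differentiable ℝ f) (hd2 : Differentiable ℝ (deriv f))
    (hd3 : Differentiable ℝ (deriv (deriv f))) (hc2 : Continuous (deriv f))
    (hc3 : Continuous (deriv (deriv f))) (B : ℝ)
    (hB : ∀ t, |deriv (deriv (deriv f)) t| ≤ B) (a x : ℝ) (hax : a ≤ x) :
    |f x - f a - deriv f a * (x - a) - deriv (deriv f) a / 2 * (x - a) ^ 2|
      ≤ B / 6 * (x - a) ^ 3 := by
  have hint : IntervalIntegrable (deriv f) volume a x := hc2.intervalIntegrable _ _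
  have e1 : ∫ t in a..x, deriv f t = f x - f a :=
    integral_deriv_eq_sub (fun t _ => (hd1 t)) hint
  have hcont3 : Continuous (fun t => deriv f a + deriv (deriv f) a * (t - a)) := by fun_prop
  have hint2 : IntervalIntegrable (fun t => deriv f a + deriv (deriv f) a * (t - a)) volume a x :=
    hcont3.intervalIntegrable _ _
  have e2 : ∫ t in a..x, (deriv f t - (deriv f a + deriv (deriv f) a * (t - a)))
      = f x - f a - deriv f a * (x - a) - deriv (deriv f) a / 2 * (x - a) ^ 2 := by
    have hintc : IntervalIntegrable (fun t : ℝ => deriv (deriv f) a * (t - a)) volume a x :=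
      Continuous.intervalIntegrable (by fun_prop) _ _
    rw [intervalIntegral.integral_sub hint hint2, e1,
      intervalIntegral.integral_add (intervalIntegrable_const) hintc,
      intervalIntegral.integral_const, smul_eq_mul,
      intervalIntegral.integral_const_mul,
      intervalIntegral.integral_comp_sub_right (fun t => t) a, integral_id]
    ring
  rw [← e2]
  have habs : |∫ t in a..x, (deriv f t - (deriv f a + deriv (deriv f) a * (t - a)))|
      ≤ ∫ t in a..x, |deriv f t - (deriv f a + deriv (deriv f) a * (t - a))| := by
    simpa [Real.norm_eq_abs] using
      intervalIntegral.norm_integral_le_integral_norm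
        (f := fun t => deriv f t - (deriv f a + deriv (deriv f) a * (t - a))) hax
  have hint1 : IntervalIntegrable
      (fun t => |deriv f t - (deriv f a + deriv (deriv f) a * (t - a))|) volume a x :=
    ((hc2.sub hcont3).abs).intervalIntegrable _ _
  have hint3 : IntervalIntegrable (fun t => B / 2 * (t - a) ^ 2) volume a x :=
    Continuous.intervalIntegrable (by fun_prop) _ _
  have hmono : ∫ t in a..x, |deriv f t - (deriv f a + deriv (deriv f) a * (t - a))|
      ≤ ∫ t in a..x, B / 2 * (t - a) ^ 2 := by
    refine intervalIntegral.integral_mono_on hax hint1 hint3 (fun t ht => ?_)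
    have := taylor1_core (deriv f) hd2 hd3 hc3 B hB a t ht.1
    calc |deriv f t - (deriv f a + deriv (deriv f) a * (t - a))|
        = |deriv f t - deriv f a - deriv (deriv f) a * (t - a)| := by ring_nf
      _ ≤ B / 2 * (t - a) ^ 2 := this
  have hval : ∫ t in a..x, B / 2 * (t - a) ^ 2 = B / 6 * (x - a) ^ 3 := by
    rw [intervalIntegral.integral_const_mul,
      intervalIntegral.integral_comp_sub_right (fun t => t ^ 2) a, integral_pow]
    norm_num
    ring
  calc |∫ t in a..x, (deriv f t - (deriv f a + deriv (deriv f) a * (t - a)))|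
      ≤ ∫ t in a..x, |deriv f t - (deriv f a + deriv (deriv f) a * (t - a))| := habs
    _ ≤ ∫ t in a..x, B / 2 * (t - a) ^ 2 := hmono
    _ = B / 6 * (x - a) ^ 3 := hval

lemma deriv_comp_neg_fun (f : ℝ → ℝ) : deriv (fun t => f (-t)) = fun t => -deriv f (-t) :=
  funext fun _ => deriv_comp_neg _ _

lemma deriv2_comp_neg (f : ℝ → ℝ) :
    deriv (deriv (fun t => f (-t))) = fun t => deriv (deriv f) (-t) := by
  rw [deriv_comp_neg_fun]
  funext t
  rw [show (fun t => -deriv f (-t)) = (fun t => -((fun s => deriv f (-s)) t)) from rfl,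
    deriv.fun_neg, deriv_comp_neg, neg_neg]

lemma deriv3_comp_neg (f : ℝ → ℝ) :
    deriv (deriv (deriv (fun t => f (-t)))) = fun t => -deriv (deriv (deriv f)) (-t) := by
  rw [deriv2_comp_neg]
  funext t
  exact deriv_comp_neg _ _

lemma taylor1_bound_s3 (f : ℝ → ℝ) (hd1 : Differentiable ℝ f) (hd2 : Differentiable ℝ (deriv f))
    (hc2 : Continuous (deriv f)) (B : ℝ)
    (hB : ∀ t, |deriv (deriv f) t| ≤ B) (a x : ℝ) :
    |f x - f a - deriv f a * (x - a)| ≤ B / 2 * (x - a) ^ 2 := by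
  rcases le_total a x with h | h
  · exact taylor1_core f hd1 hd2 hc2 B hB a x h
  · set g : ℝ → ℝ := fun t => f (-t) with hg
    have hgd1 : Differentiable ℝ g := hd1.comp (differentiable_neg)
    have hg1 : deriv g = fun t => -deriv f (-t) := deriv_comp_neg_fun f
    have hg2 : deriv (deriv g) = fun t => deriv (deriv f) (-t) := deriv2_comp_neg f
    have hgd2 : Differentiable ℝ (deriv g) := by
      rw [hg1]; exact (hd2.comp (differentiable_neg)).neg
    have hgc2 : Continuous (deriv g) := by
      rw [hg1]; exact (hc2.comp continuous_neg).neg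
    have hB' : ∀ t, |deriv (deriv g) t| ≤ B := fun t => by rw [hg2]; exact hB (-t)
    have := taylor1_core g hgd1 hgd2 hgc2 B hB' (-a) (-x) (by linarith)
    have h1 : g (-x) = f x := by simp [hg]
    have h2 : g (-a) = f a := by simp [hg]
    have h3 : deriv g (-a) = -deriv f a := by rw [hg1]; simp
    rw [h1, h2, h3] at this
    have e : f x - f a - deriv f a * (x - a) = f x - f a - -deriv f a * (-x - -a) := by ring
    have e2 : (x - a) ^ 2 = (-x - -a) ^ 2 := by ring
    rw [e, e2]; exact this

lemma taylor2_bound (f : ℝ → ℝ) (hd1 : Differentiable ℝ f) (hd2 : Differentiable ℝ (deriv f))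
    (hd3 : Differentiable ℝ (deriv (deriv f))) (hc2 : Continuous (deriv f))
    (hc3 : Continuous (deriv (deriv f))) (B : ℝ)
    (hB : ∀ t, |deriv (deriv (deriv f)) t| ≤ B) (a x : ℝ) :
    |f x - f a - deriv f a * (x - a) - deriv (deriv f) a / 2 * (x - a) ^ 2|
      ≤ B / 6 * |x - a| ^ 3 := by
  rcases le_total a x with h | h
  · have := taylor2_core f hd1 hd2 hd3 hc2 hc3 B hB a x h
    rwa [abs_of_nonneg (by linarith : (0:ℝ) ≤ x - a)]
  · set g : ℝ → ℝ := fun t => f (-t) with hg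
    have hgd1 : Differentiable ℝ g := hd1.comp (differentiable_neg)
    have hg1 : deriv g = fun t => -deriv f (-t) := deriv_comp_neg_fun f
    have hg2 : deriv (deriv g) = fun t => deriv (deriv f) (-t) := deriv2_comp_neg f
    have hg3 : deriv (deriv (deriv g)) = fun t => -deriv (deriv (deriv f)) (-t) :=
      deriv3_comp_neg f
    have hgd2 : Differentiable ℝ (deriv g) := by
      rw [hg1]; exact (hd2.comp (differentiable_neg)).neg
    have hgd3 : Differentiable ℝ (deriv (deriv g)) := by
      rw [hg2]; exact hd3.comp (differentiable_neg)
    have hgc2 : Continuous (deriv g) := by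
      rw [hg1]; exact (hc2.comp continuous_neg).neg
    have hgc3 : Continuous (deriv (deriv g)) := by
      rw [hg2]; exact hc3.comp continuous_neg
    have hB' : ∀ t, |deriv (deriv (deriv g)) t| ≤ B := fun t => by
      rw [hg3]; rw [abs_neg]; exact hB (-t)
    have := taylor2_core g hgd1 hgd2 hgd3 hgc2 hgc3 B hB' (-a) (-x) (by linarith)
    have h1 : g (-x) = f x := by simp [hg]
    have h2 : g (-a) = f a := by simp [hg]
    have h3 : deriv g (-a) = -deriv f a := by rw [hg1]; simp
    have h4 : deriv (deriv g) (-a) = deriv (deriv f) a := by rw [hg2]; simp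
    rw [h1, h2, h3, h4] at this
    have e : f x - f a - deriv f a * (x - a) - deriv (deriv f) a / 2 * (x - a) ^ 2
        = f x - f a - -deriv f a * (-x - -a) - deriv (deriv f) a / 2 * (-x - -a) ^ 2 := by ring
    have e2 : |x - a| ^ 3 = (-x - -a) ^ 3 := by
      rw [abs_of_nonpos (by linarith : x - a ≤ 0)]; ring
    rw [e, e2]; exact this

lemma abs_le_supNorm (g : ℝ → ℝ) (B : ℝ) (hB : ∀ x, |g x| ≤ B) (y : ℝ) :
    |g y| ≤ supNorm g :=
  le_ciSup (f := fun x => |g x|) ⟨B, by rintro _ ⟨x, rfl⟩; exact hB x⟩ y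

lemma contDiff_deriv_facts (f : ℝ → ℝ) (hf : ContDiff ℝ 3 f) :
    Differentiable ℝ f ∧ Differentiable ℝ (deriv f) ∧ Differentiable ℝ (deriv (deriv f)) ∧
      Continuous (deriv f) ∧ Continuous (deriv (deriv f)) := by
  have e : (3 : WithTop ℕ∞) = 2 + 1 := by norm_num
  rw [e, contDiff_succ_iff_deriv] at hf
  obtain ⟨hd1, -, h2⟩ := hf
  have hc2 : Continuous (deriv f) := h2.continuous
  have e2 : (2 : WithTop ℕ∞) = 1 + 1 := by norm_num
  rw [e2, contDiff_succ_iff_deriv] at h2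
  obtain ⟨hd2, -, h3⟩ := h2
  rw [contDiff_one_iff_deriv] at h3
  exact ⟨hd1, hd2, h3.1, hc2, h3.1.continuous⟩

set_option maxHeartbeats 1600000 in
/-- approximation of the ReLU function `x ↦ max{x,0}` by the network
`f_ReLU(x) = f_mult(f_id(x), σ(R·x))`. -/
theorem relu_network_approx (σ : ℝ → ℝ) (tσ tid : ℝ) (hσ : TwoAdmissible σ tσ)
    (htid : deriv σ tid ≠ 0)
    (R a : ℝ) (ha : 1 ≤ a)
    (hR : supNorm (deriv (deriv σ)) * a / (2 * |deriv σ tid|) ≤ R)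
    (f_id : ℝ → ℝ)
    (hfid : ∀ x : ℝ, f_id x = (R / deriv σ tid) * (σ (x / R + tid) - σ tid))
    (f_mult : ℝ → ℝ → ℝ)
    (hfm : ∀ x y : ℝ, f_mult x y = (R ^ 2 / (4 * deriv (deriv σ) tσ)) *
      (σ (2 * (x + y) / R + tσ) - 2 * σ ((x + y) / R + tσ)
        - σ (2 * (x - y) / R + tσ) + 2 * σ ((x - y) / R + tσ)))
    (f_ReLU : ℝ → ℝ)
    (hrelu : ∀ x : ℝ, f_ReLU x = f_mult (f_id x) (σ (R * x))) :
    ∀ x ∈ Set.Icc (-a) a,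
      |f_ReLU x - max x 0| ≤
        56 * (max (max (supNorm (deriv (deriv σ))) (supNorm (deriv (deriv (deriv σ))))) 1
          / min (min (2 * |deriv σ tid|) (|deriv (deriv σ) tσ|)) 1) * a ^ 3 * (1 / R) := by
  obtain ⟨hrange, _hmono, _hlip, hsmooth, hbound, _hs1σ, hs2σ, hposσ, hnegσ⟩ := hσ
  obtain ⟨hd1, hd2, hd3, hc2, hc3⟩ := contDiff_deriv_facts σ hsmooth
  have hit2 : iteratedDeriv 2 σ = deriv (deriv σ) := by
    rw [show (2:ℕ) = 1 + 1 from rfl, iteratedDeriv_succ, iteratedDeriv_one]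
  have hit3 : iteratedDeriv 3 σ = deriv (deriv (deriv σ)) := by
    rw [show (3:ℕ) = 2 + 1 from rfl, iteratedDeriv_succ, hit2]
  obtain ⟨B2, hB2⟩ := hbound 2 (by norm_num)
  obtain ⟨B3, hB3⟩ := hbound 3 le_rfl
  rw [hit2] at hB2
  rw [hit3] at hB3
  have hM2 : ∀ t, |deriv (deriv σ) t| ≤ supNorm (deriv (deriv σ)) :=
    abs_le_supNorm _ B2 hB2
  have hM3 : ∀ t, |deriv (deriv (deriv σ)) t| ≤ supNorm (deriv (deriv (deriv σ))) :=
    abs_le_supNorm _ B3 hB3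
  set M2 := supNorm (deriv (deriv σ)) with hM2def
  set M3 := supNorm (deriv (deriv (deriv σ))) with hM3def
  set M := max (max M2 M3) 1 with hMdef
  set m := min (min (2 * |deriv σ tid|) (|deriv (deriv σ) tσ|)) 1 with hmdef
  have habs1 : 0 < |deriv σ tid| := abs_pos.mpr htid
  have habs2 : 0 < |deriv (deriv σ) tσ| := abs_pos.mpr hs2σ
  have hm0 : 0 < m := lt_min (lt_min (by linarith) habs2) one_pos
  have hm1 : m ≤ 1 := min_le_right _ _
  have hms1 : m ≤ 2 * |deriv σ tid| := le_trans (min_le_left _ _) (min_le_left _ _)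
  have hms2 : m ≤ |deriv (deriv σ) tσ| := le_trans (min_le_left _ _) (min_le_right _ _)
  have hM1 : 1 ≤ M := le_max_right _ _
  have hM2le : M2 ≤ M := le_trans (le_max_left _ _) (le_max_left _ _)
  have hM3le : M3 ≤ M := le_trans (le_max_right _ _) (le_max_left _ _)
  have hM2pos : 0 < M2 := lt_of_lt_of_le habs2 (hM2 tσ)
  have hM3nonneg : 0 ≤ M3 := le_trans (abs_nonneg _) (hM3 tσ)
  have ha0 : 0 < a := by linarith
  have hR0 : 0 < R := lt_of_lt_of_le (by positivity) hR
  intro x hx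
  obtain ⟨hxl, hxr⟩ := hx
  -- Step 1 : f_id approximates the identity
  have key1 : |f_id x - x| ≤ M2 * a ^ 2 / (2 * |deriv σ tid| * R) := by
    have ht := taylor1_bound_s3 σ hd1 hd2 hc2 M2 hM2 tid (x / R + tid)
    have harg : x / R + tid - tid = x / R := by ring
    rw [harg] at ht
    have hrewrite : f_id x - x
        = (R / deriv σ tid) * (σ (x / R + tid) - σ tid - deriv σ tid * (x / R)) := by
      rw [hfid x]; field_simp
    have hx2 : (x / R) ^ 2 ≤ (a / R) ^ 2 := by
      rw [div_pow, div_pow]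
      exact (div_le_div_iff_of_pos_right (by positivity)).mpr (sq_le_sq' (by linarith) hxr)
    rw [hrewrite, abs_mul, abs_div, abs_of_pos hR0]
    calc R / |deriv σ tid| * |σ (x / R + tid) - σ tid - deriv σ tid * (x / R)|
        ≤ R / |deriv σ tid| * (M2 / 2 * (a / R) ^ 2) := by
          refine mul_le_mul_of_nonneg_left ?_ (by positivity)
          calc |σ (x / R + tid) - σ tid - deriv σ tid * (x / R)|
              ≤ M2 / 2 * (x / R) ^ 2 := ht
            _ ≤ M2 / 2 * (a / R) ^ 2 := by
                exact mul_le_mul_of_nonneg_left hx2 (by positivity)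
      _ = M2 * a ^ 2 / (2 * |deriv σ tid| * R) := by field_simp
  have key1a : |f_id x - x| ≤ a := by
    have h1 : M2 * a ^ 2 / (2 * |deriv σ tid| * R)
        = (M2 * a / (2 * |deriv σ tid|)) * (a / R) := by field_simp
    calc |f_id x - x| ≤ M2 * a ^ 2 / (2 * |deriv σ tid| * R) := key1
      _ = (M2 * a / (2 * |deriv σ tid|)) * (a / R) := h1
      _ ≤ R * (a / R) := mul_le_mul_of_nonneg_right hR (by positivity)
      _ = a := by field_simp
  have key1b : |f_id x| ≤ 2 * a := by
    have : |f_id x| ≤ |f_id x - x| + |x| := by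
      calc |f_id x| = |(f_id x - x) + x| := by ring_nf
        _ ≤ |f_id x - x| + |x| := abs_add_le _ _
    have hxa : |x| ≤ a := abs_le.mpr ⟨hxl, hxr⟩
    linarith
  -- Step 2 : f_mult approximates the product
  set u := f_id x with hu
  set v := σ (R * x) with hv
  have hv01 := hrange (R * x)
  have hvabs : |v| ≤ 1 := abs_le.mpr ⟨by linarith [hv01.1], hv01.2⟩
  have husum : |u + v| ≤ 3 * a := by
    calc |u + v| ≤ |u| + |v| := abs_add_le _ _
      _ ≤ 2 * a + 1 := add_le_add key1b hvabs
      _ ≤ 3 * a := by linarith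
  have hudiff : |u - v| ≤ 3 * a := by
    calc |u - v| ≤ |u| + |v| := abs_sub _ _
      _ ≤ 2 * a + 1 := add_le_add key1b hvabs
      _ ≤ 3 * a := by linarith
  set rem : ℝ → ℝ := fun s => σ (s / R + tσ) - σ tσ - deriv σ tσ * (s / R)
      - deriv (deriv σ) tσ / 2 * (s / R) ^ 2 with hremdef
  have hrem : ∀ s : ℝ, |rem s| ≤ M3 / 6 * (|s| / R) ^ 3 := by
    intro s
    have ht := taylor2_bound σ hd1 hd2 hd3 hc2 hc3 M3 hM3 tσ (s / R + tσ)
    have harg : s / R + tσ - tσ = s / R := by ring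
    rw [harg] at ht
    have habs : |s / R| = |s| / R := by rw [abs_div, abs_of_pos hR0]
    rw [habs] at ht
    exact ht
  set K := M3 / 6 * ((3 * a) / R) ^ 3 with hKdef
  have hremle : ∀ s : ℝ, |s| ≤ 3 * a → |rem s| ≤ K := by
    intro s hs
    calc |rem s| ≤ M3 / 6 * (|s| / R) ^ 3 := hrem s
      _ ≤ M3 / 6 * ((3 * a) / R) ^ 3 :=
          mul_le_mul_of_nonneg_left
            (pow_le_pow_left₀ (by positivity) ((div_le_div_iff_of_pos_right hR0).mpr hs) 3)
            (by positivity)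
      _ = K := rfl
  have hremle2 : ∀ s : ℝ, |s| ≤ 3 * a → |rem (2 * s)| ≤ 8 * K := by
    intro s hs
    calc |rem (2 * s)| ≤ M3 / 6 * (|2 * s| / R) ^ 3 := hrem _
      _ ≤ M3 / 6 * ((6 * a) / R) ^ 3 := by
          have h2s : |2 * s| ≤ 6 * a := by rw [abs_mul, abs_two]; linarith
          exact mul_le_mul_of_nonneg_left
            (pow_le_pow_left₀ (by positivity) ((div_le_div_iff_of_pos_right hR0).mpr h2s) 3)
            (by positivity)
      _ = 8 * K := by rw [hKdef]; field_simp; ring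
  have hKpos : 0 ≤ K := by positivity
  have hprod : f_mult u v - u * v = (R ^ 2 / (4 * deriv (deriv σ) tσ)) *
      (rem (2 * (u + v)) - 2 * rem (u + v) - rem (2 * (u - v)) + 2 * rem (u - v)) := by
    rw [hfm u v]
    simp only [hremdef]
    field_simp
    ring
  have key2 : |f_mult u v - u * v| ≤ 45 / 2 * M3 * a ^ 3 / (|deriv (deriv σ) tσ| * R) := by
    rw [hprod, abs_mul]
    have h1 := abs_le.mp (hremle2 (u + v) husum)
    have h2 := abs_le.mp (hremle (u + v) husum)
    have h3 := abs_le.mp (hremle2 (u - v) hudiff)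
    have h4 := abs_le.mp (hremle (u - v) hudiff)
    have hsum : |rem (2 * (u + v)) - 2 * rem (u + v) - rem (2 * (u - v)) + 2 * rem (u - v)|
        ≤ 20 * K := by
      rw [abs_le]; constructor <;> [linarith; linarith]
    have hcoef : |R ^ 2 / (4 * deriv (deriv σ) tσ)| = R ^ 2 / (4 * |deriv (deriv σ) tσ|) := by
      rw [abs_div, abs_mul, abs_pow, abs_of_pos hR0]
      norm_num
    rw [hcoef]
    calc R ^ 2 / (4 * |deriv (deriv σ) tσ|) *
          |rem (2 * (u + v)) - 2 * rem (u + v) - rem (2 * (u - v)) + 2 * rem (u - v)|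
        ≤ R ^ 2 / (4 * |deriv (deriv σ) tσ|) * (20 * K) :=
          mul_le_mul_of_nonneg_left hsum (by positivity)
      _ = 45 / 2 * M3 * a ^ 3 / (|deriv (deriv σ) tσ| * R) := by
          rw [hKdef]; field_simp; ring
  -- Step 3 : σ(Rx) approximates the step function
  have key3 : |x * v - max x 0| ≤ 1 / R := by
    rcases lt_trichotomy x 0 with hneg' | hzero | hpos'
    · rw [max_eq_right hneg'.le]
      have hRx : R * x < 0 := mul_neg_of_pos_of_neg hR0 hneg'
      have hb := hnegσ (R * x) hRx
      have hxne : |x| > 0 := abs_pos.mpr hneg'.ne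
      calc |x * v - 0| = |x| * |v| := by rw [sub_zero, abs_mul]
        _ ≤ |x| * (1 / |R * x|) := mul_le_mul_of_nonneg_left hb (abs_nonneg _)
        _ = 1 / R := by
            rw [abs_mul, abs_of_pos hR0]
            field_simp
    · rw [hzero]
      simp only [zero_mul, max_self, sub_self, abs_zero]
      positivity
    · rw [max_eq_left hpos'.le]
      have hRx : 0 < R * x := mul_pos hR0 hpos'
      have hb := hposσ (R * x) hRx
      calc |x * v - x| = |x| * |v - 1| := by rw [← abs_mul]; ring_nf
        _ ≤ x * (1 / (R * x)) := by
            rw [abs_of_pos hpos']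
            exact mul_le_mul_of_nonneg_left hb hpos'.le
        _ = 1 / R := by field_simp
  -- Combine
  have hsplit : f_ReLU x - max x 0
      = (f_mult u v - u * v) + (u - x) * v + (x * v - max x 0) := by
    rw [hrelu x]; ring
  have hmid : |(u - x) * v| ≤ M2 * a ^ 2 / (2 * |deriv σ tid| * R) := by
    rw [abs_mul]
    calc |u - x| * |v| ≤ (M2 * a ^ 2 / (2 * |deriv σ tid| * R)) * 1 :=
          mul_le_mul key1 hvabs (abs_nonneg _) (by positivity)
      _ = M2 * a ^ 2 / (2 * |deriv σ tid| * R) := mul_one _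
  have htotal : |f_ReLU x - max x 0| ≤ 45 / 2 * M3 * a ^ 3 / (|deriv (deriv σ) tσ| * R)
      + M2 * a ^ 2 / (2 * |deriv σ tid| * R) + 1 / R := by
    rw [hsplit]
    calc |(f_mult u v - u * v) + (u - x) * v + (x * v - max x 0)|
        ≤ |f_mult u v - u * v| + |(u - x) * v| + |x * v - max x 0| := abs_add_three _ _ _
      _ ≤ _ := add_le_add (add_le_add key2 hmid) key3
  -- Final comparison
  have hT1 : 45 / 2 * M3 * a ^ 3 / (|deriv (deriv σ) tσ| * R)
      ≤ 45 / 2 * (M * a ^ 3 / (m * R)) := by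
    rw [show 45 / 2 * (M * a ^ 3 / (m * R)) = 45 / 2 * M * a ^ 3 / (m * R) by ring]
    have hnum : M3 * a ^ 3 ≤ M * a ^ 3 := mul_le_mul_of_nonneg_right hM3le (by positivity)
    apply div_le_div₀ (by positivity) (by linarith) (by positivity)
    exact mul_le_mul_of_nonneg_right hms2 hR0.le
  have hT2 : M2 * a ^ 2 / (2 * |deriv σ tid| * R) ≤ M * a ^ 3 / (m * R) := by
    apply div_le_div₀ (by positivity) ?_ (by positivity)
      (mul_le_mul_of_nonneg_right hms1 hR0.le)
    have haa : a ^ 2 ≤ a ^ 3 := by nlinarith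
    calc M2 * a ^ 2 ≤ M * a ^ 2 := mul_le_mul_of_nonneg_right hM2le (by positivity)
      _ ≤ M * a ^ 3 := mul_le_mul_of_nonneg_left haa (by linarith)
  have hT3 : 1 / R ≤ M * a ^ 3 / (m * R) := by
    have ha3 : (1:ℝ) ≤ a ^ 3 := by nlinarith [sq_nonneg a, sq_nonneg (a - 1)]
    have h1M : (1:ℝ) ≤ M * a ^ 3 := by
      have := mul_le_mul hM1 ha3 zero_le_one (by linarith)
      linarith
    have hmR : m * R ≤ R := by
      have := mul_le_mul_of_nonneg_right hm1 hR0.le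
      linarith
    exact div_le_div₀ (by positivity) h1M (by positivity) hmR
  have hfin : 56 * (M / m) * a ^ 3 * (1 / R) = 56 * (M * a ^ 3 / (m * R)) := by
    field_simp
  rw [hfin]
  have hTpos : 0 ≤ M * a ^ 3 / (m * R) := by positivity
  linarith
end

section
/- Let M ∈ ℕ, let σ : ℝ → [0,1] be 2-admissible with associated point t_σ, let t_{σ,id} ∈ ℝ satisfy σ'(t_{σ,id}) ≠ 0, let a > 0, and assume R ≥ (‖σ''‖_∞ · (M+1)) / (2·|σ'(t_{σ,id})|). Let y ∈ [−a, a] and let f_ReLU be the network f_ReLU(x) = f_mult(f_id(x), σ(R·x)) built from f_id(x) = (R/σ'(t_{σ,id}))·(σ(x/R + t_{σ,id}) − σ(t_{σ,id})) and the product-approximating network f_mult of a 2-admissible σ. Then the network f_{hat,y}(x) = f_ReLU((M/(2a))·(x−y) + 1) − 2·f_ReLU((M/(2a))·(x−y)) + f_ReLU((M/(2a))·(x−y) − 1) satisfies |f_{hat,y}(x) − (1 − (M/(2a))·|x−y|)₊| ≤ 1792 · (max{‖σ''‖_∞, ‖σ'''‖_∞, 1} / min{2·|σ'(t_{σ,id})|,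 |σ''(t_σ)|, 1}) · M³ · (1/R) for all x ∈ [−a, a]. -/
open Real Set

section Helpers

open intervalIntegral MeasureTheory

lemma poly_bound_nonneg (f : ℝ → ℝ) (hf : Differentiable ℝ f) (hf' : Continuous (deriv f))
    (B : ℝ) (n : ℕ) (hbd : ∀ u, |deriv f u| ≤ B * |u| ^ n) (hf0 : f 0 = 0)
    (h : ℝ) (hh : 0 ≤ h) : |f h| ≤ B * h ^ (n + 1) / (n + 1) := by
  have hB : 0 ≤ B := by
    have h1 := hbd 1
    simp only [abs_one, one_pow, mul_one] at h1
    exact (abs_nonneg _).trans h1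
  have hint : ∫ u in (0:ℝ)..h, deriv f u = f h - f 0 :=
    intervalIntegral.integral_deriv_eq_sub (fun x _ => hf x) (hf'.intervalIntegrable _ _)
  have hb2 : ‖∫ u in (0:ℝ)..h, deriv f u‖ ≤ |∫ u in (0:ℝ)..h, B * u ^ n| := by
    apply intervalIntegral.norm_integral_le_abs_of_norm_le
    · refine (MeasureTheory.ae_restrict_iff' measurableSet_uIoc).2 (Filter.Eventually.of_forall ?_)
      intro t ht
      rw [Set.uIoc_of_le hh] at ht
      have h1 : |t| = t := abs_of_pos ht.1
      calc ‖deriv f t‖ = |deriv f t| := rfl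
        _ ≤ B * |t| ^ n := hbd t
        _ = B * t ^ n := by rw [h1]
    · exact (continuous_const.mul (continuous_pow n)).intervalIntegrable _ _
  have hval : ∫ u in (0:ℝ)..h, B * u ^ n = B * (h ^ (n + 1)) / (n + 1) := by
    rw [intervalIntegral.integral_const_mul, integral_pow]
    ring
  rw [hint, hf0, sub_zero] at hb2
  rw [hval] at hb2
  calc |f h| = ‖f h‖ := rfl
    _ ≤ |B * h ^ (n + 1) / (n + 1)| := hb2
    _ = B * h ^ (n + 1) / (n + 1) :=
        abs_of_nonneg (div_nonneg (mul_nonneg hB (pow_nonneg hh _)) (by positivity))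

lemma poly_bound (f : ℝ → ℝ) (hf : Differentiable ℝ f) (hf' : Continuous (deriv f))
    (B : ℝ) (n : ℕ) (hbd : ∀ u, |deriv f u| ≤ B * |u| ^ n) (hf0 : f 0 = 0)
    (h : ℝ) : |f h| ≤ B * |h| ^ (n + 1) / (n + 1) := by
  rcases le_or_gt 0 h with hh | hh
  · rw [abs_of_nonneg hh]; exact poly_bound_nonneg f hf hf' B n hbd hf0 h hh
  · set g : ℝ → ℝ := fun u => f (-u) with hg
    have hgd : Differentiable ℝ g := hf.comp differentiable_neg
    have hgderiv : ∀ u, deriv g u = -deriv f (-u) := fun u => deriv_comp_neg f u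
    have hgc : Continuous (deriv g) := by
      have : deriv g = fun u => -deriv f (-u) := funext hgderiv
      rw [this]; exact (hf'.comp continuous_neg).neg
    have hgbd : ∀ u, |deriv g u| ≤ B * |u| ^ n := by
      intro u; rw [hgderiv, abs_neg]
      simpa [abs_neg] using hbd (-u)
    have hg0 : g 0 = 0 := by simp [hg, hf0]
    have := poly_bound_nonneg g hgd hgc B n hgbd hg0 (-h) (by linarith)
    simpa [hg, abs_of_neg hh] using this

lemma taylor1_bound_s4 (g : ℝ → ℝ) (hg : Differentiable ℝ g) (hgc : Continuous (deriv g))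
    (B : ℝ) (hB : ∀ x, |deriv g x| ≤ B) (t h : ℝ) : |g (t + h) - g t| ≤ B * |h| := by
  set f : ℝ → ℝ := fun u => g (t + u) - g t with hfdef
  have hfd : Differentiable ℝ f := (hg.comp ((differentiable_id).const_add t)).sub_const _
  have hfderiv : ∀ u, deriv f u = deriv g (t + u) := by
    intro u
    have : f = fun u => g (t + u) - g t := rfl
    rw [this]
    rw [deriv_sub_const, deriv_comp_const_add]
  have hfc : Continuous (deriv f) := by
    rw [funext hfderiv]; exact hgc.comp (continuous_const.add continuous_id)
  have hbd : ∀ u, |deriv f u| ≤ B * |u| ^ 0 := by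
    intro u; rw [hfderiv]; simpa using hB (t + u)
  have := poly_bound f hfd hfc B 0 hbd (by simp [hfdef]) h
  simpa using this

lemma taylor2_bound_s4 (g : ℝ → ℝ) (hg : Differentiable ℝ g) (hg2 : Differentiable ℝ (deriv g))
    (hg2c : Continuous (deriv (deriv g)))
    (B : ℝ) (hB : ∀ x, |deriv (deriv g) x| ≤ B) (t h : ℝ) :
    |g (t + h) - g t - deriv g t * h| ≤ B * |h| ^ 2 / 2 := by
  set f : ℝ → ℝ := fun u => g (t + u) - g t - deriv g t * u with hfdef
  have hfd : Differentiable ℝ f :=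
    ((hg.comp ((differentiable_id).const_add t)).sub_const _).sub
      ((differentiable_id).const_mul _)
  have hfderiv : ∀ u, deriv f u = deriv g (t + u) - deriv g t := by
    intro u
    have h1 : HasDerivAt (fun u : ℝ => g (t + u)) (deriv g (t + u)) u := by
      have h2 := (hg (t + u)).hasDerivAt
      have h3 : HasDerivAt (fun u : ℝ => t + u) 1 u := (hasDerivAt_id u).const_add t
      have h7 : HasDerivAt (fun u : ℝ => g (t + u)) (deriv g (t + u) * 1) u := h2.comp u h3
      simpa using h7
    have h4 : HasDerivAt f (deriv g (t + u) - deriv g t) u := by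
      have h5 : HasDerivAt (fun u : ℝ => deriv g t * u) (deriv g t) u := by
        simpa using (hasDerivAt_id u).const_mul (deriv g t)
      exact (h1.sub_const _).sub h5
    exact h4.deriv
  have hfc : Continuous (deriv f) := by
    rw [funext hfderiv]
    exact ((hg2.continuous).comp (continuous_const.add continuous_id)).sub continuous_const
  have hbd : ∀ u, |deriv f u| ≤ B * |u| ^ 1 := by
    intro u; rw [hfderiv]
    simpa using taylor1_bound_s4 (deriv g) hg2 hg2c B hB t u
  have h9 : |g (t + h) - g t - deriv g t * h| ≤ B * |h| ^ (1 + 1) / ((1 : ℕ) + 1) :=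
    poly_bound f hfd hfc B 1 hbd (by simp [hfdef]) h
  calc |g (t + h) - g t - deriv g t * h| ≤ B * |h| ^ (1 + 1) / ((1 : ℕ) + 1) := h9
    _ = B * |h| ^ 2 / 2 := by norm_num

lemma taylor3_bound (g : ℝ → ℝ) (hg : Differentiable ℝ g) (hg2 : Differentiable ℝ (deriv g))
    (hg3 : Differentiable ℝ (deriv (deriv g))) (hg3c : Continuous (deriv (deriv (deriv g))))
    (B : ℝ) (hB : ∀ x, |deriv (deriv (deriv g)) x| ≤ B) (t h : ℝ) :
    |g (t + h) - g t - deriv g t * h - deriv (deriv g) t * h ^ 2 / 2| ≤ B * |h| ^ 3 / 6 := by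
  set f : ℝ → ℝ := fun u => g (t + u) - g t - deriv g t * u - deriv (deriv g) t * u ^ 2 / 2
    with hfdef
  have hfd : Differentiable ℝ f := by
    apply Differentiable.sub
    · exact ((hg.comp ((differentiable_id).const_add t)).sub_const _).sub
        ((differentiable_id).const_mul _)
    · exact (((differentiable_id).pow 2).const_mul _).div_const _
  have hfderiv : ∀ u, deriv f u = deriv g (t + u) - deriv g t - deriv (deriv g) t * u := by
    intro u
    have h1 : HasDerivAt (fun u : ℝ => g (t + u)) (deriv g (t + u)) u := by
      have h2 := (hg (t + u)).hasDerivAt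
      have h3 : HasDerivAt (fun u : ℝ => t + u) 1 u := (hasDerivAt_id u).const_add t
      have h7 : HasDerivAt (fun u : ℝ => g (t + u)) (deriv g (t + u) * 1) u := h2.comp u h3
      simpa using h7
    have h5 : HasDerivAt (fun u : ℝ => deriv g t * u) (deriv g t) u := by
      simpa using (hasDerivAt_id u).const_mul (deriv g t)
    have h6 : HasDerivAt (fun u : ℝ => deriv (deriv g) t * u ^ 2 / 2)
        (deriv (deriv g) t * u) u := by
      have := ((hasDerivAt_pow 2 u).const_mul (deriv (deriv g) t)).div_const 2
      simpa using this.congr_deriv (by ring)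
    exact (((h1.sub_const _).sub h5).sub h6).deriv
  have hfc : Continuous (deriv f) := by
    rw [funext hfderiv]
    exact (((hg2.continuous).comp (continuous_const.add continuous_id)).sub
      continuous_const).sub (continuous_const.mul continuous_id)
  have hbd : ∀ u, |deriv f u| ≤ (B / 2) * |u| ^ 2 := by
    intro u; rw [hfderiv]
    have := taylor2_bound_s4 (deriv g) hg2 hg3 hg3c B hB t u
    calc |deriv g (t + u) - deriv g t - deriv (deriv g) t * u| ≤ B * |u| ^ 2 / 2 := this
      _ = B / 2 * |u| ^ 2 := by ring
  have h9 : |g (t + h) - g t - deriv g t * h - deriv (deriv g) t * h ^ 2 / 2| ≤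
      B / 2 * |h| ^ (2 + 1) / ((2 : ℕ) + 1) :=
    poly_bound f hfd hfc (B / 2) 2 hbd (by simp [hfdef]) h
  calc |g (t + h) - g t - deriv g t * h - deriv (deriv g) t * h ^ 2 / 2| ≤
      B / 2 * |h| ^ (2 + 1) / ((2 : ℕ) + 1) := h9
    _ = B * |h| ^ 3 / 6 := by norm_num; ring

lemma hat_identity (v : ℝ) :
    max (1 - |v|) 0 = max (v + 1) 0 - 2 * max v 0 + max (v - 1) 0 := by
  rcases le_total v 0 with h0 | h0
  · rw [abs_of_nonpos h0, max_eq_right h0, max_eq_right (by linarith : v - 1 ≤ 0)]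
    rcases le_total v (-1) with h1 | h1
    · rw [max_eq_right (by linarith : v + 1 ≤ 0), max_eq_right (by linarith : 1 - -v ≤ 0)]
      ring
    · rw [max_eq_left (by linarith : (0:ℝ) ≤ v + 1), max_eq_left (by linarith : (0:ℝ) ≤ 1 - -v)]
      ring
  · rw [abs_of_nonneg h0, max_eq_left h0, max_eq_left (by linarith : (0:ℝ) ≤ v + 1)]
    rcases le_total v 1 with h1 | h1
    · rw [max_eq_right (by linarith : v - 1 ≤ 0), max_eq_left (by linarith : (0:ℝ) ≤ 1 - v)]
      ring
    · rw [max_eq_left (by linarith : (0:ℝ) ≤ v - 1), max_eq_right (by linarith : 1 - v ≤ 0)]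
      ring

lemma contDiff3_derivs (g : ℝ → ℝ) (h : ContDiff ℝ 3 g) :
    Differentiable ℝ g ∧ Differentiable ℝ (deriv g) ∧ Differentiable ℝ (deriv (deriv g)) ∧
      Continuous (deriv (deriv (deriv g))) := by
  rw [show (3 : WithTop ℕ∞) = 2 + 1 by rfl] at h
  obtain ⟨hd1, -, h⟩ := contDiff_succ_iff_deriv.mp h
  rw [show (2 : WithTop ℕ∞) = 1 + 1 by rfl] at h
  obtain ⟨hd2, -, h⟩ := contDiff_succ_iff_deriv.mp h
  obtain ⟨hd3, hc⟩ := contDiff_one_iff_deriv.mp h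
  exact ⟨hd1, hd2, hd3, hc⟩

lemma tri4 (x1 x2 x3 x4 b1 b2 b3 b4 : ℝ) (h1 : |x1| ≤ b1) (h2 : |x2| ≤ b2)
    (h3 : |x3| ≤ b3) (h4 : |x4| ≤ b4) :
    |x1 - 2 * x2 - x3 + 2 * x4| ≤ b1 + 2 * b2 + b3 + 2 * b4 := by
  rw [abs_le]
  constructor <;>
    linarith [(abs_le.mp h1).1, (abs_le.mp h1).2, (abs_le.mp h2).1, (abs_le.mp h2).2,
      (abs_le.mp h3).1, (abs_le.mp h3).2, (abs_le.mp h4).1, (abs_le.mp h4).2]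

lemma tri3 (a1 a2 a3 b1 b2 b3 E : ℝ) (h1 : |a1 - b1| ≤ E) (h2 : |a2 - b2| ≤ E)
    (h3 : |a3 - b3| ≤ E) :
    |(a1 - 2 * a2 + a3) - (b1 - 2 * b2 + b3)| ≤ 4 * E := by
  rw [abs_le]
  constructor <;>
    linarith [(abs_le.mp h1).1, (abs_le.mp h1).2, (abs_le.mp h2).1, (abs_le.mp h2).2,
      (abs_le.mp h3).1, (abs_le.mp h3).2]

end Helpers

set_option maxHeartbeats 1000000 in
/-- approximation of the hat function
`x ↦ (1 − (M/(2a))·|x−y|)₊` by the network `f_{hat,y}`. -/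
theorem hat_network_approx (M : ℕ) (hM : 0 < M)
    (σ : ℝ → ℝ) (tσ tid : ℝ) (hσ : TwoAdmissible σ tσ) (htid : deriv σ tid ≠ 0)
    (a : ℝ) (ha : 0 < a) (R : ℝ)
    (hR : supNorm (deriv (deriv σ)) * ((M : ℝ) + 1) / (2 * |deriv σ tid|) ≤ R)
    (y : ℝ) (hy : y ∈ Set.Icc (-a) a)
    (f_id : ℝ → ℝ)
    (hfid : ∀ x : ℝ, f_id x = (R / deriv σ tid) * (σ (x / R + tid) - σ tid))
    (f_mult : ℝ → ℝ → ℝ)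
    (hfm : ∀ x z : ℝ, f_mult x z = (R ^ 2 / (4 * deriv (deriv σ) tσ)) *
      (σ (2 * (x + z) / R + tσ) - 2 * σ ((x + z) / R + tσ)
        - σ (2 * (x - z) / R + tσ) + 2 * σ ((x - z) / R + tσ)))
    (f_ReLU : ℝ → ℝ)
    (hrelu : ∀ x : ℝ, f_ReLU x = f_mult (f_id x) (σ (R * x)))
    (f_hat : ℝ → ℝ)
    (hfhat : ∀ x : ℝ, f_hat x =
      f_ReLU ((M / (2 * a)) * (x - y) + 1) - 2 * f_ReLU ((M / (2 * a)) * (x - y))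
        + f_ReLU ((M / (2 * a)) * (x - y) - 1)) :
    ∀ x ∈ Set.Icc (-a) a,
      |f_hat x - max (1 - (M / (2 * a)) * |x - y|) 0| ≤
        1792 * (max (max (supNorm (deriv (deriv σ))) (supNorm (deriv (deriv (deriv σ))))) 1
          / min (min (2 * |deriv σ tid|) (|deriv (deriv σ) tσ|)) 1) * (M : ℝ) ^ 3 * (1 / R) := by
  obtain ⟨hrange, hmono, hlip, hcd, hbds, htσ1, htσ2, hposadm, hnegadm⟩ := hσ
  obtain ⟨hd1, hd2, hd3, hc3⟩ := contDiff3_derivs σ hcd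
  obtain ⟨B2, hB2⟩ := hbds 2 (by norm_num)
  have hB2' : ∀ z, |deriv (deriv σ) z| ≤ B2 := by
    intro z
    have := hB2 z
    rwa [show (2 : ℕ) = 1 + 1 from rfl, iteratedDeriv_succ, iteratedDeriv_one] at this
  obtain ⟨B3, hB3⟩ := hbds 3 (by norm_num)
  have hB3' : ∀ z, |deriv (deriv (deriv σ)) z| ≤ B3 := by
    intro z
    have := hB3 z
    rwa [show (3 : ℕ) = 1 + 1 + 1 from rfl, iteratedDeriv_succ, iteratedDeriv_succ,
      iteratedDeriv_one] at this
  set N2 := supNorm (deriv (deriv σ)) with hN2def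
  set N3 := supNorm (deriv (deriv (deriv σ))) with hN3def
  have hsup2 : ∀ z, |deriv (deriv σ) z| ≤ N2 := fun z =>
    le_ciSup ⟨B2, by rintro _ ⟨w, rfl⟩; exact hB2' w⟩ z
  have hsup3 : ∀ z, |deriv (deriv (deriv σ)) z| ≤ N3 := fun z =>
    le_ciSup ⟨B3, by rintro _ ⟨w, rfl⟩; exact hB3' w⟩ z
  set c1 := |deriv σ tid| with hc1def
  set c2 := |deriv (deriv σ) tσ| with hc2def
  have hc1 : 0 < c1 := abs_pos.2 htid
  have hc2 : 0 < c2 := abs_pos.2 htσ2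
  have hN2pos : 0 < N2 := lt_of_lt_of_le hc2 (hsup2 tσ)
  have hN3nn : 0 ≤ N3 := (abs_nonneg _).trans (hsup3 tσ)
  have hMR : (0 : ℝ) < (M : ℝ) + 1 := by positivity
  have hRpos : 0 < R :=
    lt_of_lt_of_le (by positivity : (0:ℝ) < N2 * ((M:ℝ) + 1) / (2 * c1)) hR
  set Num := max (max N2 N3) 1 with hNumdef
  set D := min (min (2 * c1) c2) 1 with hDdef
  have hD : 0 < D := lt_min (lt_min (by linarith) hc2) one_pos
  have hNum1 : (1 : ℝ) ≤ Num := le_max_right _ _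
  set C := Num / D with hCdef
  have hC1 : (1 : ℝ) ≤ C :=
    (one_le_div hD).2 ((min_le_right _ _).trans hNum1)
  have hCnn : (0 : ℝ) ≤ C := by linarith
  have key1 : N2 / (2 * c1) ≤ C :=
    div_le_div₀ (by linarith) ((le_max_left _ _).trans (le_max_left _ _)) hD
      ((min_le_left _ _).trans (min_le_left _ _))
  have key2 : N3 / c2 ≤ C :=
    div_le_div₀ (by linarith) ((le_max_right _ _).trans (le_max_left _ _)) hD
      ((min_le_left _ _).trans (min_le_right _ _))
  -- identity-network error
  have hfid_err : ∀ u : ℝ, |f_id u - u| ≤ N2 * u ^ 2 / (2 * c1 * R) := by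
    intro u
    have ht2 := taylor2_bound_s4 σ hd1 hd2 hd3.continuous N2 hsup2 tid (u / R)
    have heq : f_id u - u =
        (R / deriv σ tid) * (σ (tid + u / R) - σ tid - deriv σ tid * (u / R)) := by
      rw [hfid, add_comm (u / R) tid]
      field_simp
    rw [heq, abs_mul, abs_div, abs_of_pos hRpos]
    calc R / c1 * |σ (tid + u / R) - σ tid - deriv σ tid * (u / R)|
        ≤ R / c1 * (N2 * |u / R| ^ 2 / 2) := by
          exact mul_le_mul_of_nonneg_left ht2 (by positivity)
      _ = N2 * u ^ 2 / (2 * c1 * R) := by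
          rw [sq_abs]
          field_simp
  -- multiplication-network error
  have hmult : ∀ p q : ℝ, |f_mult p q - p * q| ≤
      5 * N3 * (|p| + |q|) ^ 3 / (6 * c2 * R) := by
    intro p q
    set r : ℝ → ℝ := fun h => σ (h + tσ) - σ tσ - deriv σ tσ * h
      - deriv (deriv σ) tσ * h ^ 2 / 2 with hrdef
    have hr : ∀ h : ℝ, |r h| ≤ N3 * |h| ^ 3 / 6 := by
      intro h
      have := taylor3_bound σ hd1 hd2 hd3 hc3 N3 hsup3 tσ h
      simp only [hrdef]
      rw [add_comm h tσ]
      exact this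
    have key : f_mult p q - p * q = (R ^ 2 / (4 * deriv (deriv σ) tσ)) *
        (r (2 * (p + q) / R) - 2 * r ((p + q) / R)
          - r (2 * (p - q) / R) + 2 * r ((p - q) / R)) := by
      simp only [hrdef, hfm]
      field_simp
      ring
    set S := |p| + |q| with hSdef
    have hS : 0 ≤ S := by positivity
    have habs : ∀ (k : ℝ), 0 ≤ k → ∀ w : ℝ, |w| ≤ k * S →
        |r (w / R)| ≤ N3 * (k * S) ^ 3 / (6 * R ^ 3) := by
      intro k hk w hw
      calc |r (w / R)| ≤ N3 * |w / R| ^ 3 / 6 := hr _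
        _ ≤ N3 * (k * S / R) ^ 3 / 6 := by
            gcongr
            rw [abs_div, abs_of_pos hRpos]
            gcongr
        _ = N3 * (k * S) ^ 3 / (6 * R ^ 3) := by
            rw [div_pow]
            ring
    have hpq : |p + q| ≤ 1 * S := by rw [one_mul]; exact abs_add_le p q
    have hpq2 : |2 * (p + q)| ≤ 2 * S := by
      rw [abs_mul, abs_two]
      have := abs_add_le p q
      linarith
    have hpmq : |p - q| ≤ 1 * S := by rw [one_mul]; exact abs_sub p q
    have hpmq2 : |2 * (p - q)| ≤ 2 * S := by
      rw [abs_mul, abs_two]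
      have := abs_sub p q
      linarith
    have b1 := habs 2 (by norm_num) _ hpq2
    have b2 := habs 1 (by norm_num) _ hpq
    have b3 := habs 2 (by norm_num) _ hpmq2
    have b4 := habs 1 (by norm_num) _ hpmq
    have tri := tri4 _ _ _ _ _ _ _ _ b1 b2 b3 b4
    rw [key, abs_mul]
    have hcoef : |R ^ 2 / (4 * deriv (deriv σ) tσ)| = R ^ 2 / (4 * c2) := by
      rw [abs_div, abs_mul, abs_pow, abs_of_pos hRpos]
      norm_num
      rfl
    rw [hcoef]
    calc R ^ 2 / (4 * c2) * |r (2 * (p + q) / R) - 2 * r ((p + q) / R)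
          - r (2 * (p - q) / R) + 2 * r ((p - q) / R)|
        ≤ R ^ 2 / (4 * c2) * (N3 * (2 * S) ^ 3 / (6 * R ^ 3)
            + 2 * (N3 * (1 * S) ^ 3 / (6 * R ^ 3))
            + N3 * (2 * S) ^ 3 / (6 * R ^ 3)
            + 2 * (N3 * (1 * S) ^ 3 / (6 * R ^ 3))) :=
          mul_le_mul_of_nonneg_left tri (by positivity)
      _ = 5 * N3 * S ^ 3 / (6 * c2 * R) := by
          field_simp
          ring

  -- ReLU-network error
  have hσ01 : ∀ z, |σ z| ≤ 1 := by
    intro z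
    rcases hrange z with ⟨h0, h1⟩
    rw [abs_of_nonneg h0]; exact h1
  have hM1 : (1:ℝ) ≤ (M:ℝ) + 1 := by linarith [Nat.cast_nonneg (α := ℝ) M]
  have hrelu_err : ∀ u : ℝ, |u| ≤ (M:ℝ) + 1 →
      |f_ReLU u - max u 0| ≤ (49/2) * (C * ((M:ℝ)+1)^3 / R) := by
    intro u hu
    have hupow : u^2 ≤ ((M:ℝ)+1)^2 := by
      rw [← sq_abs]
      exact pow_le_pow_left₀ (abs_nonneg u) hu 2
    have e1 : |f_id u - u| ≤ N2 * ((M:ℝ)+1)^2 / (2*c1*R) := by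
      refine (hfid_err u).trans ?_
      gcongr
    have e1a : |f_id u - u| ≤ (M:ℝ)+1 := by
      refine e1.trans ?_
      have h1 : N2 * ((M:ℝ)+1)^2 / (2*c1*R) = (N2 * ((M:ℝ)+1) / (2*c1)) * (((M:ℝ)+1)/R) := by
        ring
      rw [h1]
      calc (N2*((M:ℝ)+1)/(2*c1)) * (((M:ℝ)+1)/R) ≤ R * (((M:ℝ)+1)/R) := by gcongr
        _ = (M:ℝ)+1 := by rw [mul_comm]; exact div_mul_cancel₀ _ (ne_of_gt hRpos)
    have e1b : |f_id u - u| ≤ C * ((M:ℝ)+1)^2 / R := by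
      refine e1.trans ?_
      have h1 : N2 * ((M:ℝ)+1)^2/(2*c1*R) = (N2/(2*c1)) * ((M:ℝ)+1)^2 / R := by
        ring
      rw [h1]
      gcongr
    have hfidu : |f_id u| ≤ 2*((M:ℝ)+1) := by
      have h2 := abs_sub_abs_le_abs_sub (f_id u) u
      linarith
    have e2 : |f_ReLU u - f_id u * σ (R*u)| ≤ (45/2) * (C * ((M:ℝ)+1)^3 / R) := by
      rw [hrelu]
      refine (hmult _ _).trans ?_
      have hsum : |f_id u| + |σ (R*u)| ≤ 3*((M:ℝ)+1) := by
        have := hσ01 (R*u)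
        linarith
      calc 5*N3*(|f_id u| + |σ (R*u)|)^3/(6*c2*R) ≤ 5*N3*(3*((M:ℝ)+1))^3/(6*c2*R) := by
            gcongr
        _ = (45/2) * ((N3/c2) * ((M:ℝ)+1)^3 / R) := by ring
        _ ≤ (45/2) * (C * ((M:ℝ)+1)^3 / R) := by gcongr
    have e3 : |u * σ (R*u) - max u 0| ≤ 1/R := by
      rcases lt_trichotomy u 0 with hu0 | hu0 | hu0
      · rw [max_eq_right hu0.le, sub_zero, abs_mul]
        have hneg := hnegadm (R*u) (mul_neg_of_pos_of_neg hRpos hu0)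
        calc |u| * |σ (R*u)| ≤ |u| * (1/|R*u|) :=
              mul_le_mul_of_nonneg_left hneg (abs_nonneg u)
          _ = 1/R := by
              rw [abs_mul, abs_of_pos hRpos, mul_comm R |u|, ← one_div_mul_one_div,
                ← mul_assoc, mul_one_div_cancel (abs_ne_zero.mpr hu0.ne), one_mul]
      · rw [hu0]
        simp
        positivity
      · rw [max_eq_left hu0.le]
        have hident : u * σ (R*u) - u = u * (σ (R*u) - 1) := by ring
        rw [hident, abs_mul]
        have hposb := hposadm (R*u) (mul_pos hRpos hu0)
        calc |u| * |σ (R*u) - 1| ≤ |u| * (1/(R*u)) :=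
              mul_le_mul_of_nonneg_left hposb (abs_nonneg u)
          _ = 1/R := by
              rw [abs_of_pos hu0, mul_comm R u, ← one_div_mul_one_div,
                ← mul_assoc, mul_one_div_cancel (ne_of_gt hu0), one_mul]
    have e3' : (1:ℝ)/R ≤ C * ((M:ℝ)+1)^3/R := by
      gcongr
      have hp : (1:ℝ) ≤ ((M:ℝ)+1)^3 := one_le_pow₀ hM1
      nlinarith
    have emid : |f_id u * σ (R*u) - u * σ (R*u)| ≤ C * ((M:ℝ)+1)^3 / R := by
      have h1 : f_id u * σ (R*u) - u * σ (R*u) = (f_id u - u) * σ (R*u) := by ring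
      rw [h1, abs_mul]
      calc |f_id u - u| * |σ (R*u)| ≤ (C*((M:ℝ)+1)^2/R) * 1 :=
            mul_le_mul e1b (hσ01 _) (abs_nonneg _) (by positivity)
        _ = C*((M:ℝ)+1)^2/R := mul_one _
        _ ≤ C*((M:ℝ)+1)^3/R := by
            gcongr
            · norm_num
    have t1 := abs_sub_le (f_ReLU u) (f_id u * σ (R*u)) (max u 0)
    have t2 := abs_sub_le (f_id u * σ (R*u)) (u * σ (R*u)) (max u 0)
    have e3'' := e3.trans e3'
    linarith
  -- conclusion
  intro x hx
  obtain ⟨hx1, hx2⟩ := hx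
  obtain ⟨hy1, hy2⟩ := hy
  have hMa : 0 ≤ (M:ℝ)/(2*a) := by positivity
  set v := (M:ℝ) / (2 * a) * (x - y) with hvdef
  have hvabs : |v| ≤ (M:ℝ) := by
    rw [hvdef, abs_mul, abs_of_nonneg hMa]
    have hxy : |x - y| ≤ 2*a := by
      rw [abs_le]; constructor <;> linarith
    calc (M:ℝ)/(2*a) * |x-y| ≤ (M:ℝ)/(2*a) * (2*a) := by gcongr
      _ = (M:ℝ) := div_mul_cancel₀ _ (by positivity)
  have hhat : max (1 - (M:ℝ)/(2*a) * |x-y|) 0 = max (v+1) 0 - 2*max v 0 + max (v-1) 0 := by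
    rw [← hat_identity v, hvdef, abs_mul, abs_of_nonneg hMa]
  have hb1 : |v + 1| ≤ (M:ℝ)+1 := by
    have := abs_add_le v 1
    simp only [abs_one] at this
    linarith
  have hb2 : |v| ≤ (M:ℝ)+1 := by linarith
  have hb3 : |v - 1| ≤ (M:ℝ)+1 := by
    have := abs_sub v 1
    simp only [abs_one] at this
    linarith
  have E1 := hrelu_err _ hb1
  have E2 := hrelu_err _ hb2
  have E3 := hrelu_err _ hb3
  rw [hfhat x, hhat]
  have htri := tri3 (f_ReLU (v+1)) (f_ReLU v) (f_ReLU (v-1))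
    (max (v+1) 0) (max v 0) (max (v-1) 0) _ E1 E2 E3
  have hMcast : (1:ℝ) ≤ (M:ℝ) := by exact_mod_cast hM
  have hpow : ((M:ℝ)+1)^3 ≤ 8*(M:ℝ)^3 := by
    have hone : (0:ℝ) ≤ (M:ℝ) - 1 := by linarith
    nlinarith [hone, mul_nonneg hone hone, mul_nonneg (mul_nonneg hone hone) hone]
  calc |f_ReLU (v + 1) - 2 * f_ReLU v + f_ReLU (v - 1)
        - (max (v+1) 0 - 2*max v 0 + max (v-1) 0)|
      ≤ 4 * ((49/2) * (C * ((M:ℝ)+1)^3 / R)) := htri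
    _ = 98*C*((M:ℝ)+1)^3/R := by ring
    _ ≤ 98*C*(8*(M:ℝ)^3)/R := by gcongr
    _ = 784*C*(M:ℝ)^3*(1/R) := by ring
    _ ≤ 1792*C*(M:ℝ)^3*(1/R) := by
        have h0 : 0 ≤ C*(M:ℝ)^3*(1/R) := by positivity
        nlinarith
end

section
/- Let p = q + s for some q ∈ ℕ₀ and s ∈ (0,1], let C > 0, r ∈ ℕ, let g_l : ℝ → ℝ be (p,C)-smooth functions and let a_l, b_l ∈ ℝ^d (l = 1, …, r). Set m(x) = Σ_{l=1}^r g_l(a_lᵀx) and g(x) = Σ_{l=1}^r Σ_{j=0}^q (g_l^{(j)}(b_lᵀx)/j!) · ((a_l − b_l)ᵀx)^j, where g_l^{(j)} denotes the j-th derivative of g_l. Then for every x ∈ ℝ^d: |m(x) − g(x)| ≤ (r · d^p · C / q!) · ‖x‖_∞^p · max_{l=1,…,r} ‖a_l − b_l‖_∞^p. -/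
open Real Set

/-- A function `g : ℝ → ℝ` is `(p,C)`-smooth with `p = q + s`, `q ∈ ℕ₀`, `0 < s ≤ 1`:
`g` is `q` times continuously differentiable and its `q`-th derivative is `s`-Hölder
continuous with constant `C`. -/
def PCSmooth (q : ℕ) (s C : ℝ) (g : ℝ → ℝ) : Prop :=
  ContDiff ℝ q g ∧ ∀ x z : ℝ, |iteratedDeriv q g x - iteratedDeriv q g z| ≤ C * |x - z| ^ s

lemma taylor_holder (s C : ℝ) (hs : 0 < s) (hC : 0 < C) :
    ∀ (q : ℕ) (g : ℝ → ℝ), PCSmooth q s C g → ∀ u v : ℝ,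
      |g u - ∑ k ∈ Finset.range (q + 1),
          iteratedDeriv k g v / (Nat.factorial k : ℝ) * (u - v) ^ k|
        ≤ C / (Nat.factorial q : ℝ) * |u - v| ^ ((q : ℝ) + s) := by
  intro q
  induction q with
  | zero =>
    intro g hg u v
    simpa using hg.2 u v
  | succ q ih =>
    intro g hg u v
    rcases eq_or_ne u v with rfl | huv
    · have h1 : (∑ k ∈ Finset.range (q + 1 + 1),
          iteratedDeriv k g u / (Nat.factorial k : ℝ) * (u - u) ^ k) = g u := by
        rw [Finset.sum_range_succ']
        simp
      rw [h1, sub_self, abs_zero, sub_self, abs_zero,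
        Real.zero_rpow (by positivity), mul_zero]
    have hq1 : (1 : ℕ∞) ≤ (q + 1 : ℕ) := by exact_mod_cast Nat.one_le_iff_ne_zero.mpr (Nat.succ_ne_zero q)
    have hgc : ContDiff ℝ ((q : ℕ∞) + 1) g := by
      have := hg.1; exact_mod_cast this
    have hgd : Differentiable ℝ g := hgc.differentiable (by simp)
    have hderiv : PCSmooth q s C (deriv g) := by
      refine ⟨(contDiff_succ_iff_deriv.mp hgc).2.2, fun x z => ?_⟩
      have := hg.2 x z
      simpa [iteratedDeriv_succ'] using this
    have IH := ih (deriv g) hderiv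
    -- derivative of the Taylor polynomial
    set T : ℝ → ℝ := fun w => ∑ k ∈ Finset.range (q + 2),
      iteratedDeriv k g v / (Nat.factorial k : ℝ) * (w - v) ^ k with hT
    set F' : ℝ → ℝ := fun w => deriv g w - ∑ k ∈ Finset.range (q + 1),
      iteratedDeriv k (deriv g) v / (Nat.factorial k : ℝ) * (w - v) ^ k with hF'
    have hF : ∀ t : ℝ, HasDerivAt (fun w => g w - T w) (F' t) t := by
      intro t
      have hpoly : HasDerivAt T (∑ k ∈ Finset.range (q + 2),
          iteratedDeriv k g v / (Nat.factorial k : ℝ) * ((k : ℝ) * (t - v) ^ (k - 1))) t := by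
        apply HasDerivAt.fun_sum
        intro k _
        have := (((hasDerivAt_id t).sub_const v).pow k).const_mul
          (iteratedDeriv k g v / (Nat.factorial k : ℝ))
        simpa using this
      have hsum : (∑ k ∈ Finset.range (q + 2),
          iteratedDeriv k g v / (Nat.factorial k : ℝ) * ((k : ℝ) * (t - v) ^ (k - 1)))
          = ∑ k ∈ Finset.range (q + 1),
            iteratedDeriv k (deriv g) v / (Nat.factorial k : ℝ) * (t - v) ^ k := by
        rw [Finset.sum_range_succ']
        simp only [Nat.cast_zero, zero_mul, mul_zero, pow_zero, add_zero, Nat.add_sub_cancel]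
        refine Finset.sum_congr rfl fun k _ => ?_
        rw [iteratedDeriv_succ', Nat.factorial_succ]
        push_cast
        field_simp
      have := ((hgd t).hasDerivAt).sub hpoly
      rw [hsum] at this
      exact this
    -- reparametrize to [0,1]
    set w : ℝ := u - v with hw
    have hwpos : 0 < |w| := abs_pos.mpr (sub_ne_zero.mpr huv)
    set φ : ℝ → ℝ := fun t => g (v + t * w) - T (v + t * w) with hφ
    have hφd : ∀ t : ℝ, HasDerivAt φ (w * F' (v + t * w)) t := by
      intro t
      have hin : HasDerivAt (fun t : ℝ => v + t * w) w t := by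
        simpa using ((hasDerivAt_id t).mul_const w).const_add v
      have := (hF (v + t * w)).comp t hin
      rw [mul_comm w]; exact this
    set K : ℝ := C / (Nat.factorial q : ℝ) * |w| ^ ((q : ℝ) + s + 1) with hK
    have hKpos : 0 < K := by
      apply mul_pos (div_pos hC (by positivity))
      exact rpow_pos_of_pos hwpos _
    have hφ'cont : Continuous fun t : ℝ => w * F' (v + t * w) := by
      have hdc : Continuous (deriv g) := (contDiff_succ_iff_deriv.mp hgc).2.2.continuous
      have hin : Continuous (fun t : ℝ => v + t * w) := by continuity
      have hFc : Continuous F' := hdc.sub (by apply continuous_finset_sum; intro k _; fun_prop)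
      exact continuous_const.mul (hFc.comp hin)
    have hftc : φ 1 - φ 0 = ∫ t in (0:ℝ)..1, w * F' (v + t * w) := by
      rw [intervalIntegral.integral_eq_sub_of_hasDerivAt (fun t _ => hφd t)
        (hφ'cont.intervalIntegrable 0 1)]
    have hbound : ∀ t ∈ Set.uIoc (0:ℝ) 1, ‖w * F' (v + t * w)‖ ≤ K * t ^ ((q:ℝ) + s) := by
      intro t ht
      rw [uIoc_of_le zero_le_one] at ht
      have ht0 : 0 ≤ t := le_of_lt ht.1
      have h1 : |F' (v + t * w)| ≤ C / (Nat.factorial q : ℝ) * |t * w| ^ ((q:ℝ) + s) := by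
        have := IH (v + t * w) v
        simp only [hF']
        simpa using this
      have h2 : |t * w| ^ ((q:ℝ) + s) = t ^ ((q:ℝ)+s) * |w| ^ ((q:ℝ)+s) := by
        rw [abs_mul, abs_of_nonneg ht0, mul_rpow ht0 (abs_nonneg w)]
      rw [Real.norm_eq_abs, abs_mul]
      calc |w| * |F' (v + t * w)| ≤ |w| * (C / (Nat.factorial q : ℝ) * (t ^ ((q:ℝ)+s) * |w| ^ ((q:ℝ)+s))) := by
            apply mul_le_mul_of_nonneg_left _ (abs_nonneg w)
            rw [← h2]; exact h1
        _ = K * t ^ ((q:ℝ) + s) := by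
            rw [hK, rpow_add_one (ne_of_gt hwpos)]
            ring
    have hrint : IntervalIntegrable (fun t : ℝ => K * t ^ ((q:ℝ)+s)) MeasureTheory.volume 0 1 := by
      apply IntervalIntegrable.const_mul
      apply (intervalIntegral.intervalIntegrable_rpow (by left; have : (0:ℝ) ≤ q := Nat.cast_nonneg q; linarith))
    have hint : |φ 1 - φ 0| ≤ K / ((q:ℝ) + s + 1) := by
      rw [hftc]
      have := intervalIntegral.norm_integral_le_of_norm_le
        (f := fun t => w * F' (v + t * w)) (μ := MeasureTheory.volume) (a := 0) (b := 1)
        zero_le_one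
          (MeasureTheory.ae_of_all _ fun t ht => hbound t (by rwa [uIoc_of_le zero_le_one])) hrint
      rw [Real.norm_eq_abs] at this
      refine this.trans ?_
      rw [intervalIntegral.integral_const_mul, integral_rpow (by left; have : (0:ℝ) ≤ q := Nat.cast_nonneg q; linarith)]
      rw [Real.one_rpow, Real.zero_rpow (by positivity)]
      apply le_of_eq
      ring
    -- conclude
    have hTv : T v = g v := by
      simp only [hT]
      rw [Finset.sum_range_succ']
      simp
    have hφ1 : φ 1 = g u - T u := by
      simp only [hφ]
      rw [show v + 1 * w = u by rw [hw]; ring]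
    have hφ0 : φ 0 = 0 := by
      simp only [hφ]
      rw [show v + 0 * w = v by ring, hTv, sub_self]
    have hrw : ((q : ℝ) + s + 1) = ((q + 1 : ℕ) : ℝ) + s := by push_cast; ring
    have hA : (0:ℝ) ≤ |u - v| ^ (((q + 1 : ℕ) : ℝ) + s) := rpow_nonneg (abs_nonneg _) _
    have hfac : ((q + 1).factorial : ℝ) ≤ (q.factorial : ℝ) * ((q : ℝ) + s + 1) := by
      push_cast [Nat.factorial_succ]
      have hqf : (0:ℝ) < (q.factorial : ℝ) := by positivity
      nlinarith
    calc |g u - ∑ k ∈ Finset.range (q + 1 + 1),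
          iteratedDeriv k g v / (Nat.factorial k : ℝ) * (u - v) ^ k|
        = |φ 1 - φ 0| := by rw [hφ1, hφ0, sub_zero]
      _ ≤ K / ((q : ℝ) + s + 1) := hint
      _ = C * |u - v| ^ (((q + 1 : ℕ) : ℝ) + s) / ((q.factorial : ℝ) * ((q : ℝ) + s + 1)) := by
          rw [hK, hw, hrw]
          have hden : (((q + 1 : ℕ) : ℝ) + s) ≠ 0 := by positivity
          have hqf : ((q.factorial : ℝ)) ≠ 0 := by positivity
          field_simp
      _ ≤ C / ((q + 1).factorial : ℝ) * |u - v| ^ (((q + 1 : ℕ) : ℝ) + s) := by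
          rw [show C / ((q + 1).factorial : ℝ) * |u - v| ^ (((q + 1 : ℕ) : ℝ) + s)
              = C * |u - v| ^ (((q + 1 : ℕ) : ℝ) + s) / ((q + 1).factorial : ℝ) by ring]
          exact div_le_div_of_nonneg_left (by positivity) (by positivity) hfac

/-- approximation of a projection pursuit regression function by sums of
Taylor expansions around perturbed directions (Lemma 6). -/
theorem projection_pursuit_taylor_approx (d r q : ℕ) (hd : 0 < d) (hr : 0 < r)
    (s C p : ℝ) (hs : 0 < s) (hs1 : s ≤ 1) (hp : p = q + s) (hC : 0 < C)
    (g : Fin r → ℝ → ℝ) (hg : ∀ l, PCSmooth q s C (g l))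
    (a b : Fin r → Fin d → ℝ)
    (m G : (Fin d → ℝ) → ℝ)
    (hm : ∀ x, m x = ∑ l, g l (∑ i, a l i * x i))
    (hG : ∀ x, G x = ∑ l, ∑ k ∈ Finset.range (q + 1),
      (iteratedDeriv k (g l) (∑ i, b l i * x i) / (Nat.factorial k : ℝ)) *
        (∑ i, (a l i - b l i) * x i) ^ k) :
    ∀ x : Fin d → ℝ,
      |m x - G x| ≤ ((r : ℝ) * (d : ℝ) ^ p * C / (Nat.factorial q : ℝ)) * ‖x‖ ^ p *
        (⨆ l : Fin r, ‖a l - b l‖) ^ p := by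
  intro x
  have hp0 : 0 ≤ p := by rw [hp]; positivity
  haveI : Nonempty (Fin r) := ⟨⟨0, hr⟩⟩
  set M := ⨆ l : Fin r, ‖a l - b l‖ with hM
  have hMl : ∀ l, ‖a l - b l‖ ≤ M :=
    fun l => by rw [hM]; exact le_ciSup (Set.Finite.bddAbove (Set.finite_range (fun l : Fin r => ‖a l - b l‖))) l
  have hM0 : 0 ≤ M := le_trans (norm_nonneg _) (hMl ⟨0, hr⟩)
  have hl : ∀ l : Fin r, |g l (∑ i, a l i * x i) - ∑ k ∈ Finset.range (q + 1),
      iteratedDeriv k (g l) (∑ i, b l i * x i) / (Nat.factorial k : ℝ) *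
        (∑ i, (a l i - b l i) * x i) ^ k|
      ≤ C / (Nat.factorial q : ℝ) * ((d : ℝ) * ‖x‖ * M) ^ p := by
    intro l
    have hsub : (∑ i, a l i * x i) - (∑ i, b l i * x i) = ∑ i, (a l i - b l i) * x i := by
      rw [← Finset.sum_sub_distrib]
      exact Finset.sum_congr rfl fun i _ => by ring
    have h1 := taylor_holder s C hs hC q (g l) (hg l) (∑ i, a l i * x i) (∑ i, b l i * x i)
    rw [hsub] at h1
    refine h1.trans ?_
    have habs : |∑ i, (a l i - b l i) * x i| ≤ (d : ℝ) * ‖x‖ * M := by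
      calc |∑ i, (a l i - b l i) * x i| ≤ ∑ i, |(a l i - b l i) * x i| :=
            Finset.abs_sum_le_sum_abs _ _
        _ ≤ ∑ _i : Fin d, M * ‖x‖ := by
            refine Finset.sum_le_sum fun i _ => ?_
            rw [abs_mul]
            have h2 : |a l i - b l i| ≤ M := by
              have h3 : |a l i - b l i| ≤ ‖a l - b l‖ := by
                have := norm_le_pi_norm (a l - b l) i
                simpa [Real.norm_eq_abs] using this
              exact h3.trans (hMl l)
            have h4 : |x i| ≤ ‖x‖ := by
              have := norm_le_pi_norm x i
              simpa [Real.norm_eq_abs] using this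
            exact mul_le_mul h2 h4 (abs_nonneg _) hM0
        _ = (d : ℝ) * ‖x‖ * M := by
            rw [Finset.sum_const, Finset.card_univ, Fintype.card_fin, nsmul_eq_mul]
            ring
    rw [hp]
    apply mul_le_mul_of_nonneg_left _ (by positivity)
    exact Real.rpow_le_rpow (abs_nonneg _) habs (by positivity)
  calc |m x - G x|
      = |∑ l, (g l (∑ i, a l i * x i) - ∑ k ∈ Finset.range (q + 1),
          iteratedDeriv k (g l) (∑ i, b l i * x i) / (Nat.factorial k : ℝ) *
            (∑ i, (a l i - b l i) * x i) ^ k)| := by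
        rw [hm, hG, ← Finset.sum_sub_distrib]
    _ ≤ ∑ l, |g l (∑ i, a l i * x i) - ∑ k ∈ Finset.range (q + 1),
          iteratedDeriv k (g l) (∑ i, b l i * x i) / (Nat.factorial k : ℝ) *
            (∑ i, (a l i - b l i) * x i) ^ k| := Finset.abs_sum_le_sum_abs _ _
    _ ≤ ∑ _l : Fin r, C / (Nat.factorial q : ℝ) * ((d : ℝ) * ‖x‖ * M) ^ p :=
        Finset.sum_le_sum fun l _ => hl l
    _ = (r : ℝ) * (C / (Nat.factorial q : ℝ) * ((d : ℝ) * ‖x‖ * M) ^ p) := by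
        rw [Finset.sum_const, Finset.card_univ, Fintype.card_fin, nsmul_eq_mul]
    _ = ((r : ℝ) * (d : ℝ) ^ p * C / (Nat.factorial q : ℝ)) * ‖x‖ ^ p * M ^ p := by
        rw [Real.mul_rpow (by positivity) hM0,
          Real.mul_rpow (by positivity) (norm_nonneg x)]
        ring
end

section
/- Let d, r ∈ ℕ, p > 0, let n ≥ 2 be an integer, let a₁, …, a_r ∈ [−1,1]^d, let I_n ∈ ℕ, and let b_l^{(i)} (l = 1,…,r; i = 1,…,I_n) be independent random vectors, each uniformly distributed on [−1,1]^d. Then E[ min_{i=1,…,I_n} max_{l=1,…,r} ‖b_l^{(i)} − a_l‖_∞^{2p} ] ≤ (log n / n)^{2p/(2p+1)} + 2^{2p}·(1 − 2^{−r·d}·(log n / n)^{r·d/(2p+1)})^{I_n}. Moreover, for every sufficiently large constant c₉ > 0 there is a constant c > 0 such that, if I_n ≥ c₉·(log n)²·(n/log n)^{r·d/(2p+1)}, then for n sufficiently large E[ min_{i=1,…,I_n} max_{l=1,…,r} ‖b_l^{(i)} − a_l‖_∞^{2p} ] ≤ c·(log n / n)^{2p/(2p+1)}. -/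
open MeasureTheory ProbabilityTheory Real Set

/-- The uniform distribution on the cube `[−1,1]^d`. -/
noncomputable def uniformCube (d : ℕ) : Measure (Fin d → ℝ) :=
  (volume (Set.univ.pi fun _ : Fin d => Set.Icc (-1 : ℝ) 1))⁻¹ •
    volume.restrict (Set.univ.pi fun _ : Fin d => Set.Icc (-1 : ℝ) 1)


lemma group_indep {Ω : Type} [mΩ : MeasurableSpace Ω] {μ : Measure Ω}
    [IsProbabilityMeasure μ] {In r d : ℕ}
    (b : Fin In → Fin r → Ω → Fin d → ℝ) (hb : ∀ i l, Measurable (b i l))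
    (hindep : iIndepFun
        (fun il : Fin In × Fin r => b il.1 il.2) μ)
    (C : Fin r → Set (Fin d → ℝ)) (hC : ∀ l, MeasurableSet (C l)) :
    μ (⋂ i, (⋂ l, b i l ⁻¹' C l)ᶜ) = ∏ i, μ ((⋂ l, b i l ⁻¹' C l)ᶜ) := by
  set m : Fin In × Fin r → MeasurableSpace Ω :=
    fun il => MeasurableSpace.comap (b il.1 il.2) inferInstance with hm
  have hIndep : iIndep m μ := hindep.iIndep
  have h_le : ∀ il, m il ≤ mΩ := fun il => (hb il.1 il.2).comap_le
  have hFmeas : ∀ (i : Fin In) (l : Fin r),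
      MeasurableSet[m (i, l)] (b i l ⁻¹' C l) := fun i l => ⟨C l, hC l, rfl⟩
  -- claim by induction on finsets
  have claim : ∀ T : Finset (Fin In),
      μ (⋂ i ∈ T, (⋂ l, b i l ⁻¹' C l)ᶜ) = ∏ i ∈ T, μ ((⋂ l, b i l ⁻¹' C l)ᶜ) := by
    intro T
    induction T using Finset.induction_on with
    | empty => simp
    | @insert j T hjT ih =>
      rw [Finset.set_biInter_insert, Finset.prod_insert hjT, ← ih]
      have hdisj : Disjoint {il : Fin In × Fin r | il.1 = j}
          {il : Fin In × Fin r | il.1 ∈ T} := by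
        rw [Set.disjoint_left]
        rintro ⟨i, l⟩ h1 h2
        exact hjT (h1 ▸ h2)
      have hInd := indep_iSup_of_disjoint h_le hIndep hdisj
      rw [Indep_iff] at hInd
      refine hInd _ _ ?_ ?_
      · refine MeasurableSet.compl (MeasurableSet.iInter fun l => ?_)
        exact (le_iSup₂ (f := fun il (_ : il ∈ {il : Fin In × Fin r | il.1 = j}) => m il)
          (j, l) rfl) _ (hFmeas j l)
      · refine MeasurableSet.biInter (Set.to_countable _) fun i hi => ?_
        refine MeasurableSet.compl (MeasurableSet.iInter fun l => ?_)
        exact (le_iSup₂ (f := fun il (_ : il ∈ {il : Fin In × Fin r | il.1 ∈ T}) => m il)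
          (i, l) hi) _ (hFmeas i l)
  have := claim Finset.univ
  simpa using this

lemma fiber_prod {Ω : Type} [mΩ : MeasurableSpace Ω] {μ : Measure Ω}
    [IsProbabilityMeasure μ] {In r d : ℕ}
    (b : Fin In → Fin r → Ω → Fin d → ℝ) (hb : ∀ i l, Measurable (b i l))
    (hindep : iIndepFun
        (fun il : Fin In × Fin r => b il.1 il.2) μ)
    (C : Fin r → Set (Fin d → ℝ)) (hC : ∀ l, MeasurableSet (C l)) (i : Fin In) :
    μ (⋂ l, b i l ⁻¹' C l) = ∏ l, μ (b i l ⁻¹' C l) := by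
  have hinj : Function.Injective (fun l : Fin r => (i, l)) := by
    intro x y h; simpa using h
  have := hindep.meas_biInter (S := Finset.univ.image (fun l : Fin r => (i, l)))
    (s := fun il => b il.1 il.2 ⁻¹' C il.2)
    (fun il _ => ⟨C il.2, hC il.2, rfl⟩)
  rw [Finset.prod_image (fun x _ y _ h => hinj h)] at this
  rw [← this]
  congr 1
  ext ω
  simp

lemma cube_prob_lower (d : ℕ) (a : Fin d → ℝ)
    (ha : ∀ i, a i ∈ Set.Icc (-1:ℝ) 1) {ε : ℝ} (hε0 : 0 < ε) (hε1 : ε ≤ 1) :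
    ENNReal.ofReal ((ε/2)^d) ≤ uniformCube d (Metric.closedBall a ε) := by
  set cube : Set (Fin d → ℝ) := Set.univ.pi fun _ : Fin d => Set.Icc (-1 : ℝ) 1 with hcube
  have hvol : volume cube = ENNReal.ofReal 2 ^ d := by
    rw [hcube, volume_pi_pi]
    simp [Real.volume_Icc]
    norm_num
  set c : Fin d → ℝ := fun j => if a j ≤ 0 then a j else a j - ε with hc
  set B : Set (Fin d → ℝ) := Set.univ.pi fun j => Set.Icc (c j) (c j + ε) with hB
  have hvolB : volume B = ENNReal.ofReal ε ^ d := by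
    rw [hB, volume_pi_pi]
    simp [Real.volume_Icc]
  have hsub : B ⊆ Metric.closedBall a ε ∩ cube := by
    intro x hx
    constructor
    · rw [Metric.mem_closedBall, dist_pi_le_iff hε0.le]
      intro j
      have hxj := hx j (Set.mem_univ j)
      rw [Real.dist_eq, abs_le]
      rcases le_or_gt (a j) 0 with h | h
      · simp only [hc, if_pos h] at hxj
        constructor <;> [linarith [hxj.1]; linarith [hxj.2]]
      · simp only [hc, if_neg (not_le.mpr h)] at hxj
        constructor <;> [linarith [hxj.1]; linarith [hxj.2]]
    · intro j _
      have hxj := hx j (Set.mem_univ j)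
      have haj := ha j
      rcases le_or_gt (a j) 0 with h | h
      · simp only [hc, if_pos h] at hxj
        exact ⟨by linarith [hxj.1, haj.1], by linarith [hxj.2]⟩
      · simp only [hc, if_neg (not_le.mpr h)] at hxj
        exact ⟨by linarith [hxj.1], by linarith [hxj.2, haj.2]⟩
  have hmeas : uniformCube d (Metric.closedBall a ε) =
      (volume cube)⁻¹ * volume (Metric.closedBall a ε ∩ cube) := by
    rw [uniformCube, Measure.smul_apply, smul_eq_mul,
      Measure.restrict_apply measurableSet_closedBall]
  rw [hmeas, hvol]
  have h1 : ENNReal.ofReal ε ^ d ≤ volume (Metric.closedBall a ε ∩ cube) :=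
    hvolB ▸ measure_mono hsub
  calc ENNReal.ofReal ((ε/2)^d) = (ENNReal.ofReal 2 ^ d)⁻¹ * ENNReal.ofReal ε ^ d := by
        rw [div_pow, ENNReal.ofReal_div_of_pos (by positivity), ENNReal.ofReal_pow hε0.le,
          ENNReal.ofReal_pow (by norm_num), ENNReal.div_eq_inv_mul]
    _ ≤ _ := mul_le_mul_right h1 _

lemma key_part1 (d r : ℕ) (hd : 0 < d) (hr : 0 < r) (p : ℝ) (hp : 0 < p)
    (n : ℕ) (hn : 2 ≤ n) (In : ℕ) (hIn : 0 < In)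
    (a : Fin r → Fin d → ℝ) (ha : ∀ l i, a l i ∈ Set.Icc (-1 : ℝ) 1)
    (Ω : Type) (mΩ : MeasurableSpace Ω) (μ : Measure Ω) (hμ : IsProbabilityMeasure μ)
    (b : Fin In → Fin r → Ω → Fin d → ℝ) (hb : ∀ i l, Measurable (b i l))
    (hindep : iIndepFun
        (fun il : Fin In × Fin r => b il.1 il.2) μ)
    (hmap : ∀ i l, μ.map (b i l) = uniformCube d) :
    ∫ ω, ⨅ i : Fin In, ⨆ l : Fin r, ‖b i l ω - a l‖ ^ (2 * p) ∂μ ≤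
      (Real.log n / n) ^ (2 * p / (2 * p + 1)) +
        (2 : ℝ) ^ (2 * p) *
          (1 - ((2 : ℝ) ^ (r * d))⁻¹ * (Real.log n / n) ^ ((r * d : ℕ) / (2 * p + 1))) ^ In := by
  haveI : Nonempty (Fin In) := ⟨⟨0, hIn⟩⟩
  haveI : Nonempty (Fin r) := ⟨⟨0, hr⟩⟩
  have h2p1 : (0:ℝ) < 2 * p + 1 := by linarith
  set x : ℝ := Real.log n / n with hxdef
  have hn0 : (0:ℝ) < n := by positivity
  have hlogpos : 0 < Real.log n := Real.log_pos (by exact_mod_cast hn)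
  have hx0 : 0 < x := div_pos hlogpos hn0
  have hx1 : x < 1 := (div_lt_one hn0).mpr (by linarith [Real.log_le_sub_one_of_pos hn0])
  set ε : ℝ := x ^ (1 / (2 * p + 1)) with hεdef
  have hε0 : 0 < ε := Real.rpow_pos_of_pos hx0 _
  have hε1 : ε ≤ 1 := Real.rpow_le_one hx0.le hx1.le (by positivity)
  set q : ℝ := ((2 : ℝ) ^ (r * d))⁻¹ * x ^ (((r * d : ℕ) : ℝ) / (2 * p + 1)) with hqdef
  -- q = (ε/2)^(d*r)
  have hεpow : ε ^ (d * r) = x ^ (((r * d : ℕ) : ℝ) / (2 * p + 1)) := by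
    rw [hεdef, ← Real.rpow_natCast (x ^ (1 / (2 * p + 1))) (d * r), ← Real.rpow_mul hx0.le]
    congr 1
    push_cast
    field_simp
  have hq : q = (ε / 2) ^ (d * r) := by
    rw [hqdef, ← hεpow, div_pow, div_eq_mul_inv, mul_comm, mul_comm r d, pow_mul, pow_mul]
  have hq0 : 0 < q := by rw [hq]; positivity
  have hq1 : q ≤ 1 := by
    rw [hq]; exact pow_le_one₀ (by positivity) (by linarith)
  -- events
  set C : Fin r → Set (Fin d → ℝ) := fun l => Metric.closedBall (a l) ε with hCdef
  have hC : ∀ l, MeasurableSet (C l) := fun l => measurableSet_closedBall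
  set F : Fin In → Set Ω := fun i => ⋂ l, b i l ⁻¹' C l with hFdef
  have hFmeas : ∀ i, MeasurableSet (F i) :=
    fun i => MeasurableSet.iInter fun l => (hb i l) (hC l)
  set E : Set Ω := ⋂ i, (F i)ᶜ with hEdef
  have hEmeas : MeasurableSet E := MeasurableSet.iInter fun i => (hFmeas i).compl
  -- lower bound on μ (F i)
  have hFlow : ∀ i, ENNReal.ofReal q ≤ μ (F i) := by
    intro i
    rw [hFdef]
    rw [fiber_prod b hb hindep C hC i]
    have hsingle : ∀ l, ENNReal.ofReal ((ε/2)^d) ≤ μ (b i l ⁻¹' C l) := by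
      intro l
      have hma : (μ.map (b i l)) (C l) = μ (b i l ⁻¹' C l) := Measure.map_apply (hb i l) (hC l)
      rw [hmap i l] at hma
      rw [← hma]
      exact cube_prob_lower d (a l) (fun j => ha l j) hε0 hε1
    calc ENNReal.ofReal q = (ENNReal.ofReal ((ε/2)^d))^r := by
          rw [← ENNReal.ofReal_pow (by positivity), ← pow_mul, ← hq]
      _ = ∏ _l : Fin r, ENNReal.ofReal ((ε/2)^d) := by
          simp [Finset.prod_const]
      _ ≤ ∏ l, μ (b i l ⁻¹' C l) := Finset.prod_le_prod' fun l _ => hsingle l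
  -- μ E bound
  have hEbound : μ E ≤ (1 - ENNReal.ofReal q) ^ In := by
    rw [hEdef, group_indep b hb hindep C hC]
    calc ∏ i, μ ((F i)ᶜ) ≤ ∏ _i : Fin In, (1 - ENNReal.ofReal q) := by
          refine Finset.prod_le_prod' fun i _ => ?_
          rw [prob_compl_eq_one_sub (hFmeas i)]
          exact tsub_le_tsub_left (hFlow i) 1
      _ = (1 - ENNReal.ofReal q) ^ In := by simp [Finset.prod_const]
  have hEreal : (μ E).toReal ≤ (1 - q) ^ In := by
    have h1 : ((1 - ENNReal.ofReal q) ^ In).toReal = (1 - q) ^ In := by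
      rw [ENNReal.toReal_pow]
      congr 1
      rw [← ENNReal.ofReal_one, ← ENNReal.ofReal_sub _ hq0.le, ENNReal.toReal_ofReal (by linarith)]
    rw [← h1]
    exact ENNReal.toReal_mono (ENNReal.pow_ne_top (ne_top_of_le_ne_top ENNReal.one_ne_top tsub_le_self)) hEbound
  -- a.e. cube membership
  set cube : Set (Fin d → ℝ) := Set.univ.pi fun _ : Fin d => Set.Icc (-1 : ℝ) 1 with hcubedef
  have hcubemeas : MeasurableSet cube := MeasurableSet.univ_pi fun _ => measurableSet_Icc
  have hae : ∀ᵐ ω ∂μ, ∀ i l, b i l ω ∈ cube := by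
    rw [ae_all_iff]
    intro i
    rw [ae_all_iff]
    intro l
    have hzero : μ (b i l ⁻¹' cubeᶜ) = 0 := by
      have hma : (μ.map (b i l)) cubeᶜ = μ (b i l ⁻¹' cubeᶜ) := Measure.map_apply (hb i l) hcubemeas.compl
      rw [hmap i l] at hma
      rw [← hma, uniformCube, Measure.smul_apply, smul_eq_mul,
        Measure.restrict_apply hcubemeas.compl]
      simp [hcubedef]
    rw [ae_iff]
    convert hzero using 2
    rfl
  -- pointwise bound
  set g : Ω → ℝ := fun ω => ε ^ (2 * p) + E.indicator (fun _ => (2:ℝ) ^ (2 * p)) ω with hgdef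
  have hptwise : ∀ᵐ ω ∂μ, (⨅ i : Fin In, ⨆ l : Fin r, ‖b i l ω - a l‖ ^ (2 * p)) ≤ g ω := by
    filter_upwards [hae] with ω hω
    have hbddb : BddBelow (Set.range fun i : Fin In => ⨆ l, ‖b i l ω - a l‖ ^ (2 * p)) :=
      (Set.finite_range _).bddBelow
    by_cases hωE : ω ∈ E
    · -- bound by 2^(2p)
      have hterm : ∀ i l, ‖b i l ω - a l‖ ^ (2 * p) ≤ (2:ℝ) ^ (2 * p) := by
        intro i l
        refine Real.rpow_le_rpow (norm_nonneg _) ?_ (by positivity)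
        rw [pi_norm_le_iff_of_nonneg (by norm_num)]
        intro j
        have h1 := (hω i l) j (Set.mem_univ j)
        have h2 := ha l j
        rw [Pi.sub_apply, Real.norm_eq_abs, abs_le]
        constructor <;> [linarith [h1.1, h2.2]; linarith [h1.2, h2.1]]
      have : (⨅ i : Fin In, ⨆ l : Fin r, ‖b i l ω - a l‖ ^ (2 * p)) ≤ (2:ℝ) ^ (2 * p) := by
        refine le_trans (ciInf_le hbddb (Classical.arbitrary _)) ?_
        exact ciSup_le fun l => hterm _ l
      rw [hgdef]
      simp only [Set.indicator_of_mem hωE]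
      have hεp : (0:ℝ) ≤ ε ^ (2 * p) := Real.rpow_nonneg hε0.le _
      linarith
    · -- some F i occurs
      have hex : ∃ i, ω ∈ F i := by
        by_contra hcon
        push_neg at hcon
        exact hωE (Set.mem_iInter.mpr fun i => hcon i)
      obtain ⟨i, hi⟩ := hex
      have hsup : (⨆ l : Fin r, ‖b i l ω - a l‖ ^ (2 * p)) ≤ ε ^ (2 * p) := by
        refine ciSup_le fun l => ?_
        refine Real.rpow_le_rpow (norm_nonneg _) ?_ (by positivity)
        have := Set.mem_iInter.mp hi l
        simpa [hCdef, dist_eq_norm] using this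
      rw [hgdef]
      simp only [Set.indicator_of_notMem hωE, add_zero]
      exact le_trans (ciInf_le hbddb i) hsup
  have hg_int : Integrable g μ := by
    exact (integrable_const _).add ((integrable_const _).indicator hEmeas)
  have hf_nonneg : ∀ᵐ ω ∂μ, 0 ≤ ⨅ i : Fin In, ⨆ l : Fin r, ‖b i l ω - a l‖ ^ (2 * p) := by
    refine ae_of_all _ fun ω => ?_
    refine Real.iInf_nonneg fun i => Real.iSup_nonneg fun l => ?_
    exact Real.rpow_nonneg (norm_nonneg _) _
  have hint : ∫ ω, (⨅ i : Fin In, ⨆ l : Fin r, ‖b i l ω - a l‖ ^ (2 * p)) ∂μ ≤ ∫ ω, g ω ∂μ :=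
    integral_mono_of_nonneg hf_nonneg hg_int hptwise
  have hgval : ∫ ω, g ω ∂μ = ε ^ (2 * p) + (2:ℝ) ^ (2 * p) * (μ E).toReal := by
    rw [hgdef]
    rw [integral_add (integrable_const _) ((integrable_const _).indicator hEmeas),
      integral_const, integral_indicator_const _ hEmeas]
    simp [mul_comm]
    exact Or.inl rfl
  have hεp : ε ^ (2 * p) = x ^ (2 * p / (2 * p + 1)) := by
    rw [hεdef, ← Real.rpow_mul hx0.le]
    congr 1
    field_simp
  refine le_trans hint ?_
  rw [hgval, hεp]
  have : (2:ℝ) ^ (2*p) * (μ E).toReal ≤ (2:ℝ) ^ (2*p) * (1 - q) ^ In :=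
    mul_le_mul_of_nonneg_left hEreal (Real.rpow_nonneg (by norm_num) _)
  have hqe : (1 - ((2 : ℝ) ^ (r * d))⁻¹ * x ^ (((r * d : ℕ):ℝ) / (2 * p + 1))) ^ In
      = (1 - q) ^ In := by rw [hqdef]
  rw [hqe]
  linarith

-- arithmetic core of part 2
lemma part2_arith (rd : ℕ) (hrd : 0 < rd) (p : ℝ) (hp : 0 < p)
    (c₉ : ℝ) (hc₉ : (2:ℝ) ^ rd ≤ c₉) (n : ℕ) (hn : 3 ≤ n) (In : ℕ)
    (hIn' : c₉ * (Real.log n) ^ 2 * ((n : ℝ) / Real.log n) ^ ((rd : ℕ) / (2 * p + 1)) ≤ In) :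
    (1 - ((2 : ℝ) ^ rd)⁻¹ * (Real.log n / n) ^ ((rd : ℕ) / (2 * p + 1))) ^ In ≤
      (Real.log n / n) ^ (2 * p / (2 * p + 1)) := by
  have h2p1 : (0:ℝ) < 2 * p + 1 := by linarith
  set s : ℝ := ((rd : ℕ) : ℝ) / (2 * p + 1) with hsdef
  have hn0 : (0:ℝ) < n := by positivity
  have hlog1 : 1 ≤ Real.log n := by
    rw [Real.le_log_iff_exp_le hn0]
    have := Real.exp_one_lt_d9
    have h3 : (3:ℝ) ≤ n := by exact_mod_cast hn
    linarith
  have hlogpos : (0:ℝ) < Real.log n := by linarith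
  set x : ℝ := Real.log n / n with hxdef
  have hx0 : 0 < x := div_pos hlogpos hn0
  have hx1 : x < 1 := (div_lt_one hn0).mpr (by linarith [Real.log_le_sub_one_of_pos hn0])
  set q : ℝ := ((2 : ℝ) ^ rd)⁻¹ * x ^ s with hqdef
  have hq0 : 0 < q := by positivity
  have hq1 : q ≤ 1 := by
    rw [hqdef]
    have h1 : x ^ s ≤ 1 := Real.rpow_le_one hx0.le hx1.le (by positivity)
    have h2 : ((2:ℝ) ^ rd)⁻¹ ≤ 1 := by
      rw [inv_le_one_iff₀]; right; exact one_le_pow₀ (by norm_num)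
    calc q ≤ 1 * 1 := by rw [hqdef] at *; exact mul_le_mul h2 h1 (by positivity) (by norm_num)
      _ = 1 := by norm_num
  have hone : x ^ s * ((n:ℝ) / Real.log n) ^ s = 1 := by
    rw [← Real.mul_rpow hx0.le (by positivity),
      show x * ((n:ℝ) / Real.log n) = 1 by rw [hxdef]; field_simp, Real.one_rpow]
  have hqIn : (Real.log n) ^ 2 ≤ q * In := by
    have h1 : q * (c₉ * (Real.log n) ^ 2 * ((n:ℝ) / Real.log n) ^ s) ≤ q * In :=
      mul_le_mul_of_nonneg_left hIn' hq0.le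
    have h2 : q * (c₉ * (Real.log n) ^ 2 * ((n:ℝ) / Real.log n) ^ s)
        = c₉ * ((2:ℝ) ^ rd)⁻¹ * (Real.log n) ^ 2 * (x ^ s * ((n:ℝ) / Real.log n) ^ s) := by
      rw [hqdef]; ring
    rw [h2, hone, mul_one] at h1
    have h3 : (1:ℝ) ≤ c₉ * ((2:ℝ) ^ rd)⁻¹ := by
      rw [← div_eq_mul_inv, le_div_iff₀ (by positivity)]
      linarith
    nlinarith [sq_nonneg (Real.log n)]
  calc (1 - q) ^ In ≤ Real.exp (-q) ^ In := by
        refine pow_le_pow_left₀ (by linarith) ?_ In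
        linarith [Real.add_one_le_exp (-q)]
    _ = Real.exp ((In : ℝ) * (-q)) := (Real.exp_nat_mul _ In).symm
    _ ≤ Real.exp (-(Real.log n) ^ 2) := by
        rw [Real.exp_le_exp]
        nlinarith
    _ ≤ Real.exp (-Real.log n) := by
        rw [Real.exp_le_exp]
        nlinarith
    _ = (n:ℝ)⁻¹ := by rw [Real.exp_neg, Real.exp_log hn0]
    _ ≤ x ^ (2 * p / (2 * p + 1)) := by
        have ha1 : 2 * p / (2 * p + 1) ≤ 1 := by
          rw [div_le_one h2p1]; linarith
        have hinv0 : (0:ℝ) < (n:ℝ)⁻¹ := by positivity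
        have hinv1 : (n:ℝ)⁻¹ ≤ 1 := by
          rw [inv_le_one_iff₀]; right; exact_mod_cast Nat.one_le_cast.mpr (by linarith : 1 ≤ n)
        calc (n:ℝ)⁻¹ = ((n:ℝ)⁻¹) ^ (1:ℝ) := (Real.rpow_one _).symm
          _ ≤ ((n:ℝ)⁻¹) ^ (2 * p / (2 * p + 1)) :=
            Real.rpow_le_rpow_of_exponent_ge hinv0 hinv1 ha1
          _ ≤ x ^ (2 * p / (2 * p + 1)) := by
            refine Real.rpow_le_rpow (by positivity) ?_ (by positivity)
            rw [hxdef, inv_eq_one_div]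
            gcongr


/-- expected value of the `2p`-th power of the best sup-norm approximation of
the target directions by `I_n` independent uniform draws, and its consequence for
sufficiently many repetitions. -/
theorem random_directions_expectation (d r : ℕ) (hd : 0 < d) (hr : 0 < r)
    (p : ℝ) (hp : 0 < p) :
    (∀ (n : ℕ), 2 ≤ n → ∀ (In : ℕ), 0 < In →
      ∀ (a : Fin r → Fin d → ℝ), (∀ l i, a l i ∈ Set.Icc (-1 : ℝ) 1) →
      ∀ (Ω : Type) (mΩ : MeasurableSpace Ω) (μ : Measure Ω), IsProbabilityMeasure μ →
      ∀ (b : Fin In → Fin r → Ω → Fin d → ℝ), (∀ i l, Measurable (b i l)) →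
      iIndepFun
        (fun il : Fin In × Fin r => b il.1 il.2) μ →
      (∀ i l, μ.map (b i l) = uniformCube d) →
      ∫ ω, ⨅ i : Fin In, ⨆ l : Fin r, ‖b i l ω - a l‖ ^ (2 * p) ∂μ ≤
        (Real.log n / n) ^ (2 * p / (2 * p + 1)) +
          (2 : ℝ) ^ (2 * p) *
            (1 - ((2 : ℝ) ^ (r * d))⁻¹ * (Real.log n / n) ^ ((r * d : ℕ) / (2 * p + 1))) ^ In) ∧
    (∃ c₉₀ : ℝ, 0 < c₉₀ ∧ ∀ c₉ : ℝ, c₉₀ ≤ c₉ → ∃ c : ℝ, 0 < c ∧ ∃ n₀ : ℕ,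
      ∀ (n : ℕ), n₀ ≤ n → ∀ (In : ℕ),
        c₉ * (Real.log n) ^ 2 * ((n : ℝ) / Real.log n) ^ ((r * d : ℕ) / (2 * p + 1)) ≤ In →
      ∀ (a : Fin r → Fin d → ℝ), (∀ l i, a l i ∈ Set.Icc (-1 : ℝ) 1) →
      ∀ (Ω : Type) (mΩ : MeasurableSpace Ω) (μ : Measure Ω), IsProbabilityMeasure μ →
      ∀ (b : Fin In → Fin r → Ω → Fin d → ℝ), (∀ i l, Measurable (b i l)) →
      iIndepFun
        (fun il : Fin In × Fin r => b il.1 il.2) μ →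
      (∀ i l, μ.map (b i l) = uniformCube d) →
      ∫ ω, ⨅ i : Fin In, ⨆ l : Fin r, ‖b i l ω - a l‖ ^ (2 * p) ∂μ ≤
        c * (Real.log n / n) ^ (2 * p / (2 * p + 1))) := by
  constructor
  · intro n hn In hIn a ha Ω mΩ μ hμ b hb hindep hmap
    exact key_part1 d r hd hr p hp n hn In hIn a ha Ω mΩ μ hμ b hb hindep hmap
  · refine ⟨2 ^ (r * d), by positivity, fun c₉ hc₉ =>
      ⟨1 + (2:ℝ) ^ (2 * p), by positivity, 3, ?_⟩⟩
    intro n hn In hIn' a ha Ω mΩ μ hμ b hb hindep hmap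
    have hrd : 0 < r * d := Nat.mul_pos hr hd
    have hn0 : (0:ℝ) < n := by positivity
    have hlogpos : 0 < Real.log n := Real.log_pos (by exact_mod_cast (by omega : 2 ≤ n))
    have hc0 : (0:ℝ) < c₉ := lt_of_lt_of_le (by positivity) hc₉
    have hInpos : 0 < In := by
      have hpos : (0:ℝ) < c₉ * (Real.log n) ^ 2 *
          ((n : ℝ) / Real.log n) ^ (((r * d : ℕ):ℝ) / (2 * p + 1)) :=
        mul_pos (mul_pos hc0 (pow_pos hlogpos 2))
          (Real.rpow_pos_of_pos (div_pos hn0 hlogpos) _)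
      exact_mod_cast Nat.cast_pos.mp (hpos.trans_le hIn')
    have h1 := key_part1 d r hd hr p hp n (by omega) In hInpos a ha Ω mΩ μ hμ b hb hindep hmap
    have h2 := part2_arith (r * d) hrd p hp c₉ hc₉ n hn In hIn'
    have hxa : (0:ℝ) ≤ (Real.log n / n) ^ (2 * p / (2 * p + 1)) :=
      Real.rpow_nonneg (by positivity) _
    have h3 : (2:ℝ) ^ (2 * p) *
        (1 - ((2 : ℝ) ^ (r * d))⁻¹ * (Real.log n / n) ^ (((r * d : ℕ):ℝ) / (2 * p + 1))) ^ In ≤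
        (2:ℝ) ^ (2 * p) * (Real.log n / n) ^ (2 * p / (2 * p + 1)) :=
      mul_le_mul_of_nonneg_left h2 (Real.rpow_nonneg (by norm_num) _)
    have hring : (1 + (2:ℝ) ^ (2 * p)) * (Real.log n / n) ^ (2 * p / (2 * p + 1)) =
        (Real.log n / n) ^ (2 * p / (2 * p + 1)) +
          (2:ℝ) ^ (2 * p) * (Real.log n / n) ^ (2 * p / (2 * p + 1)) := by ring
    rw [hring]
    exact h1.trans (by linarith)
end

section
/- Let p = q + s with q ∈ ℕ₀ and s ∈ (0,1], let C > 0, let j ∈ {0, …, q}, and let g : ℝ → ℝ be q times continuously differentiable such that its j-th derivative g^{(j)} is (p−j, C)-smooth. Let A ≥ 1, u ∈ ℝ, a, b ∈ ℝ^d, and let P denote the Taylor polynomial of g^{(j)} of degree q − j around u. Then for every x ∈ [−A, A]^d: | (g^{(j)}(bᵀx)/j!)·((a − b)ᵀx)^j − (P(bᵀx)/j!)·((a − b)ᵀx)^j | ≤ (1/(q−j)!)·C·d^j·A^j·( max{ |bᵀx − u|, ‖a − b‖_∞ } )^p. -/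
open Real Set

private lemma idw_Icc_eq {f : ℝ → ℝ} {n : ℕ} (m : ℕ) (hm : m ≤ n)
    (hf : ContDiff ℝ (n : ℕ∞) f) {a b : ℝ} (hab : a < b) {x : ℝ} (hx : x ∈ Icc a b) :
    iteratedDerivWithin m f (Icc a b) x = iteratedDeriv m f x := by
  have h := ((contDiff_iff_ftaylorSeries.mp hf).hasFTaylorSeriesUpToOn
      (Icc a b)).eq_iteratedFDerivWithin_of_uniqueDiffOn
    (by exact_mod_cast hm) (uniqueDiffOn_Icc hab) hx
  rw [iteratedDerivWithin_eq_iteratedFDerivWithin, iteratedDeriv_eq_iteratedFDeriv, ← h]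
  rfl

private lemma taylor_rem_right (k : ℕ) (f : ℝ → ℝ) (hf : ContDiff ℝ (k : ℕ∞) f)
    (C s : ℝ) (hs : 0 < s) (hC : 0 ≤ C)
    (hH : ∀ x z : ℝ, |iteratedDeriv k f x - iteratedDeriv k f z| ≤ C * |x - z| ^ s)
    (u y : ℝ) (huy : u < y) :
    |f y - ∑ m ∈ Finset.range (k + 1), iteratedDeriv m f u / (Nat.factorial m : ℝ) * (y - u) ^ m|
      ≤ C / (Nat.factorial k : ℝ) * |y - u| ^ k * |y - u| ^ s := by
  have hyu : (0:ℝ) < y - u := by linarith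
  have habs : |y - u| = y - u := abs_of_pos hyu
  cases k with
  | zero =>
      simpa [iteratedDeriv_zero] using hH y u
  | succ n =>
      have hfn : ContDiffOn ℝ (n : ℕ∞) f (Icc u y) :=
        (hf.of_le (by exact_mod_cast n.le_succ)).contDiffOn
      have hdiff : Differentiable ℝ (iteratedDeriv n f) :=
        hf.differentiable_iteratedDeriv n (by exact_mod_cast n.lt_succ_self)
      have hf' : DifferentiableOn ℝ (iteratedDerivWithin n f (Icc u y)) (Ioo u y) := by
        refine hdiff.differentiableOn.congr fun t ht => ?_
        exact idw_Icc_eq n n.le_succ hf huy (Ioo_subset_Icc_self ht)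
      obtain ⟨x', hx', hrem⟩ := taylor_mean_remainder_lagrange huy.ne
        (by rw [uIcc_of_le huy.le]; exact_mod_cast hfn)
        (by rw [uIcc_of_le huy.le, uIoo_of_le huy.le]; exact hf')
      rw [uIcc_of_le huy.le] at hrem
      rw [uIoo_of_le huy.le] at hx'
      have htay : taylorWithinEval f n (Icc u y) u y
          = ∑ m ∈ Finset.range (n + 1),
              iteratedDeriv m f u / (Nat.factorial m : ℝ) * (y - u) ^ m := by
        rw [taylor_within_apply]
        refine Finset.sum_congr rfl fun m hm => ?_
        rw [idw_Icc_eq m (by have := Finset.mem_range.mp hm; omega : m ≤ n + 1) hf huy (left_mem_Icc.mpr huy.le)]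
        simp [smul_eq_mul]
        ring
      have hidw : iteratedDerivWithin (n + 1) f (Icc u y) x'
          = iteratedDeriv (n + 1) f x' :=
        idw_Icc_eq (n+1) le_rfl hf huy (Ioo_subset_Icc_self hx')
      have key : f y - ∑ m ∈ Finset.range (n + 1 + 1),
            iteratedDeriv m f u / (Nat.factorial m : ℝ) * (y - u) ^ m
          = (iteratedDeriv (n+1) f x' - iteratedDeriv (n+1) f u) * (y - u) ^ (n+1)
              / (Nat.factorial (n+1) : ℝ) := by
        rw [Finset.sum_range_succ, ← htay]
        rw [hidw] at hrem
        have hfac : (0:ℝ) < (Nat.factorial (n+1) : ℝ) := by positivity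
        field_simp at hrem ⊢
        linarith [hrem]
      rw [key]
      rw [abs_div, abs_mul, abs_pow, abs_of_pos (show (0:ℝ) < (Nat.factorial (n+1):ℝ) by positivity)]
      have h1 : |iteratedDeriv (n+1) f x' - iteratedDeriv (n+1) f u| ≤ C * |y - u| ^ s := by
        refine (hH x' u).trans ?_
        have : |x' - u| ≤ |y - u| := by
          rw [habs, abs_of_pos (by linarith [hx'.1] : (0:ℝ) < x' - u)]
          linarith [hx'.2]
        exact mul_le_mul_of_nonneg_left (rpow_le_rpow (abs_nonneg _) this hs.le) hC
      calc |iteratedDeriv (n+1) f x' - iteratedDeriv (n+1) f u| * |y - u| ^ (n+1)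
            / (Nat.factorial (n+1) : ℝ)
          ≤ (C * |y - u| ^ s) * |y - u| ^ (n+1) / (Nat.factorial (n+1) : ℝ) := by
            gcongr
        _ = C / (Nat.factorial (n+1) : ℝ) * |y - u| ^ (n+1) * |y - u| ^ s := by ring

private lemma taylor_rem (k : ℕ) (f : ℝ → ℝ) (hf : ContDiff ℝ (k : ℕ∞) f)
    (C s : ℝ) (hs : 0 < s) (hC : 0 ≤ C)
    (hH : ∀ x z : ℝ, |iteratedDeriv k f x - iteratedDeriv k f z| ≤ C * |x - z| ^ s)
    (u y : ℝ) :
    |f y - ∑ m ∈ Finset.range (k + 1), iteratedDeriv m f u / (Nat.factorial m : ℝ) * (y - u) ^ m|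
      ≤ C / (Nat.factorial k : ℝ) * |y - u| ^ k * |y - u| ^ s := by
  rcases lt_trichotomy u y with h | h | h
  · exact taylor_rem_right k f hf C s hs hC hH u y h
  · subst h
    have hsum : ∑ m ∈ Finset.range (k + 1),
        iteratedDeriv m f u / (Nat.factorial m : ℝ) * (u - u) ^ m = f u := by
      rw [Finset.sum_eq_single 0]
      · simp
      · intro m _ hm
        simp [sub_self, zero_pow hm]
      · intro h; simp at h
    rw [hsum]
    simp [sub_self, abs_zero, Real.zero_rpow hs.ne']
  · -- reflect: F t = f (2u - t)
    set F : ℝ → ℝ := fun t => f (2 * u + -t) with hF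
    have hFd : ∀ (n : ℕ) (t : ℝ),
        iteratedDeriv n F t = (-1 : ℝ) ^ n * iteratedDeriv n f (2 * u - t) := by
      intro n t
      have hA : iteratedDeriv n F t
          = (-1 : ℝ) ^ n • iteratedDeriv n (fun z => f (2 * u + z)) (-t) :=
        iteratedDeriv_comp_neg n (fun z => f (2 * u + z)) t
      rw [hA, iteratedDeriv_comp_const_add, smul_eq_mul, sub_eq_add_neg]
    have hFc : ContDiff ℝ (k : ℕ∞) F :=
      hf.comp (contDiff_const.add contDiff_id.neg)
    have hFH : ∀ x z : ℝ, |iteratedDeriv k F x - iteratedDeriv k F z| ≤ C * |x - z| ^ s := by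
      intro x z
      rw [hFd, hFd, ← mul_sub, abs_mul, abs_pow, abs_neg, abs_one, one_pow, one_mul]
      have h5 := hH (2 * u - x) (2 * u - z)
      have he : (2 * u - x) - (2 * u - z) = -(x - z) := by ring
      rwa [he, abs_neg] at h5
    have hlt : u < 2 * u - y := by linarith
    have h0 := taylor_rem_right k F hFc C s hs hC hFH u (2 * u - y) hlt
    have hFy : F (2 * u - y) = f y := by
      show f (2 * u + -(2 * u - y)) = f y
      congr 1; ring
    have hsum : ∑ m ∈ Finset.range (k + 1),
          iteratedDeriv m F u / (Nat.factorial m : ℝ) * (2 * u - y - u) ^ m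
        = ∑ m ∈ Finset.range (k + 1),
          iteratedDeriv m f u / (Nat.factorial m : ℝ) * (y - u) ^ m := by
      refine Finset.sum_congr rfl fun m _ => ?_
      rw [hFd]
      have h2 : (2 * u - u) = u := by ring
      have h3 : (2 * u - y - u : ℝ) = -(y - u) := by ring
      rw [h2, h3, neg_pow (y - u) m]
      calc (-1:ℝ) ^ m * iteratedDeriv m f u / (Nat.factorial m : ℝ)
              * ((-1:ℝ) ^ m * (y - u) ^ m)
          = ((-1:ℝ) * (-1)) ^ m
              * (iteratedDeriv m f u / (Nat.factorial m : ℝ) * (y - u) ^ m) := by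
            rw [mul_pow]; ring
        _ = iteratedDeriv m f u / (Nat.factorial m : ℝ) * (y - u) ^ m := by norm_num
    have habs : |2 * u - y - u| = |y - u| := by
      rw [show (2 * u - y - u : ℝ) = -(y - u) by ring, abs_neg]
    rw [hFy, hsum, habs] at h0
    exact h0

/-- Taylor remainder bound for one term of the expansion in the projection
pursuit approximation (part of the proof of Lemma 7). -/
theorem taylor_term_bound (d q j : ℕ) (hd : 0 < d) (hj : j ≤ q)
    (s C p : ℝ) (hs : 0 < s) (hs1 : s ≤ 1) (hp : p = q + s) (hC : 0 < C)
    (g : ℝ → ℝ) (hg : ContDiff ℝ q g)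
    -- `g^{(j)}` is `(p−j, C)`-smooth, i.e. `(q−j)` times continuously differentiable with
    -- `s`-Hölder `(q−j)`-th derivative
    (hgj : ContDiff ℝ (q - j) (iteratedDeriv j g) ∧
      ∀ x z : ℝ, |iteratedDeriv (q - j) (iteratedDeriv j g) x
          - iteratedDeriv (q - j) (iteratedDeriv j g) z| ≤ C * |x - z| ^ s)
    (A : ℝ) (hA : 1 ≤ A) (u : ℝ) (a b : Fin d → ℝ)
    (P : ℝ → ℝ)
    (hP : ∀ y : ℝ, P y = ∑ m ∈ Finset.range (q - j + 1),
      (iteratedDeriv m (iteratedDeriv j g) u / (Nat.factorial m : ℝ)) * (y - u) ^ m) :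
    ∀ x : Fin d → ℝ, (∀ i, x i ∈ Set.Icc (-A) A) →
      |(iteratedDeriv j g (∑ i, b i * x i) / (Nat.factorial j : ℝ)) *
            (∑ i, (a i - b i) * x i) ^ j
          - (P (∑ i, b i * x i) / (Nat.factorial j : ℝ)) * (∑ i, (a i - b i) * x i) ^ j| ≤
        (1 / (Nat.factorial (q - j) : ℝ)) * C * (d : ℝ) ^ j * A ^ j *
          (max |(∑ i, b i * x i) - u| ‖a - b‖) ^ p := by
  intro x hx
  have hA0 : (0:ℝ) < A := lt_of_lt_of_le one_pos hA
  set k := q - j with hk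
  set f := iteratedDeriv j g with hf
  set y := ∑ i, b i * x i with hy
  set T := ∑ i, (a i - b i) * x i with hT'
  set M := max |y - u| ‖a - b‖ with hM
  have hM0 : (0:ℝ) ≤ M := le_trans (abs_nonneg _) (le_max_left _ _)
  have hrem : |f y - P y| ≤ C / (Nat.factorial k : ℝ) * |y - u| ^ k * |y - u| ^ s := by
    rw [hP y]
    have hcont : ContDiff ℝ (k : ℕ∞) f := by
      have h := hgj.1; rw [hk]; exact_mod_cast h
    exact taylor_rem k f hcont C s hs hC.le hgj.2 u y
  have hfacj : (1:ℝ) ≤ (Nat.factorial j : ℝ) := by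
    exact_mod_cast Nat.one_le_iff_ne_zero.mpr (Nat.factorial_ne_zero j)
  have heq : f y / (Nat.factorial j : ℝ) * T ^ j - P y / (Nat.factorial j : ℝ) * T ^ j
      = (f y - P y) * T ^ j / (Nat.factorial j : ℝ) := by ring
  rw [heq, abs_div, abs_mul, abs_pow,
    abs_of_pos (show (0:ℝ) < (Nat.factorial j : ℝ) by positivity)]
  have hTle : |T| ≤ (d : ℝ) * (A * ‖a - b‖) := by
    calc |T| ≤ ∑ i, |(a i - b i) * x i| := Finset.abs_sum_le_sum_abs _ _
      _ ≤ ∑ _i : Fin d, A * ‖a - b‖ := by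
          refine Finset.sum_le_sum fun i _ => ?_
          rw [abs_mul]
          have h1 : |a i - b i| ≤ ‖a - b‖ := by
            simpa [Real.norm_eq_abs] using norm_le_pi_norm (a - b) i
          have h2 : |x i| ≤ A := abs_le.mpr ⟨(hx i).1, (hx i).2⟩
          calc |a i - b i| * |x i| ≤ ‖a - b‖ * A :=
                mul_le_mul h1 h2 (abs_nonneg _) (norm_nonneg _)
            _ = A * ‖a - b‖ := mul_comm _ _
      _ = (d : ℝ) * (A * ‖a - b‖) := by
          rw [Finset.sum_const, Finset.card_univ, Fintype.card_fin, nsmul_eq_mul]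
  have hb1 : |f y - P y| ≤ C / (Nat.factorial k : ℝ) * M ^ k * M ^ s := by
    refine hrem.trans ?_
    have h1 : |y - u| ^ k ≤ M ^ k := pow_le_pow_left₀ (abs_nonneg _) (le_max_left _ _) k
    have h2 : |y - u| ^ s ≤ M ^ s := rpow_le_rpow (abs_nonneg _) (le_max_left _ _) hs.le
    have hnn : (0:ℝ) ≤ C / (Nat.factorial k : ℝ) := by positivity
    calc C / (Nat.factorial k : ℝ) * |y - u| ^ k * |y - u| ^ s
        ≤ C / (Nat.factorial k : ℝ) * M ^ k * |y - u| ^ s := by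
          gcongr
      _ ≤ C / (Nat.factorial k : ℝ) * M ^ k * M ^ s := by
          have : (0:ℝ) ≤ C / (Nat.factorial k : ℝ) * M ^ k := by positivity
          exact mul_le_mul_of_nonneg_left h2 this
  have hb2 : |T| ^ j ≤ (d : ℝ) ^ j * A ^ j * M ^ j := by
    calc |T| ^ j ≤ ((d : ℝ) * (A * ‖a - b‖)) ^ j :=
          pow_le_pow_left₀ (abs_nonneg _) hTle j
      _ = (d : ℝ) ^ j * A ^ j * ‖a - b‖ ^ j := by rw [mul_pow, mul_pow]; ring
      _ ≤ (d : ℝ) ^ j * A ^ j * M ^ j := by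
          have h3 : ‖a - b‖ ^ j ≤ M ^ j := pow_le_pow_left₀ (norm_nonneg _) (le_max_right _ _) j
          have : (0:ℝ) ≤ (d : ℝ) ^ j * A ^ j := by positivity
          exact mul_le_mul_of_nonneg_left h3 this
  have hMp : M ^ k * M ^ s * M ^ j = M ^ p := by
    rcases hM0.eq_or_lt with hMz | hMz
    · rw [← hMz]
      have hp0 : (0:ℝ) < p := by
        have : (0:ℝ) ≤ (q:ℝ) := Nat.cast_nonneg q
        rw [hp]; linarith
      rw [Real.zero_rpow hp0.ne', Real.zero_rpow hs.ne']
      ring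
    · rw [← Real.rpow_natCast M k, ← Real.rpow_natCast M j, ← Real.rpow_add hMz,
        ← Real.rpow_add hMz, hp]
      congr 1
      have hkq : (k : ℝ) = (q : ℝ) - (j : ℝ) := by
        rw [hk]; push_cast [Nat.cast_sub hj]; ring
      rw [hkq]; ring
  calc |f y - P y| * |T| ^ j / (Nat.factorial j : ℝ)
      ≤ |f y - P y| * |T| ^ j := div_le_self (by positivity) hfacj
    _ ≤ (C / (Nat.factorial k : ℝ) * M ^ k * M ^ s) * ((d : ℝ) ^ j * A ^ j * M ^ j) :=
        mul_le_mul hb1 hb2 (by positivity) (by positivity)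
    _ = 1 / (Nat.factorial k : ℝ) * C * (d : ℝ) ^ j * A ^ j * (M ^ k * M ^ s * M ^ j) := by
        ring
    _ = 1 / (Nat.factorial k : ℝ) * C * (d : ℝ) ^ j * A ^ j * M ^ p := by rw [hMp]
end
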